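/- arXiv:2401.13130 — 4 statements merged into one kernel-verified Lean document; each statement's English description precedes it below -/
import Mathlib

section
/- Let μ be a positive Radon measure on ℝⁿ, S a cube with ℓ(S) > 0, and K a Calderón–Zygmund kernel with parameter δ ∈ (0,1] and growth exponent α: |K(t,x) − K(t,x')| ≲ (|x−x'|/|t−x|)^δ / |t−x|^α whenever 2|x−x'| < |t−x|. Let J be a cube with Ĵ ⊆ (1/2)S (so dist(J, ∂S) ≥ ℓ(S)/4), and let h_J be a function supported in Ĵ with mean zero and ‖h_J‖_{L¹(μ)} ≤ ℓ(J)⁰·μ(Ĵ)^{1/2} (e.g., a Haar function). Then |∫_{Q∖S} ∫ K(t,x) h_J(x) dμ(x) dμ(t)| ≲ (ℓ(J)/ℓ(S))^δ μ(Ĵ)^{1/2} ρ(S), where ρ(S) = Σ_{m≥1} μ(mS)/(ℓ(mS)^α m^{δ/2+1}) is the density of μ at S, and Q ⊇ S is any larger cube. -/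
open MeasureTheory Set
open scoped ENNReal

noncomputable section

/-- Closed axis-parallel cube of center `c` and half side length `r`. -/
def cCube (n : ℕ) (c : Fin n → ℝ) (r : ℝ) : Set (Fin n → ℝ) :=
  {x | ∀ i, |x i - c i| ≤ r}

lemma cCube_mono {n : ℕ} {c : Fin n → ℝ} {r r' : ℝ} (h : r ≤ r') :
    cCube n c r ⊆ cCube n c r' := fun _ hx i => (hx i).trans h

lemma measurableSet_cCube {n : ℕ} {c : Fin n → ℝ} {r : ℝ} :
    MeasurableSet (cCube n c r) := by
  have h : cCube n c r = ⋂ i, {x : Fin n → ℝ | |x i - c i| ≤ r} := by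
    ext x; simp [cCube]
  rw [h]
  exact MeasurableSet.iInter fun i =>
    measurableSet_le ((measurable_pi_apply i).sub measurable_const).abs measurable_const

lemma rpow_neg_anti {x y e : ℝ} (hx : 0 < x) (hxy : x ≤ y) (he : 0 ≤ e) :
    y ^ (-e) ≤ x ^ (-e) := by
  rw [Real.rpow_neg (le_trans hx.le hxy), Real.rpow_neg hx.le]
  exact inv_anti₀ (Real.rpow_pos_of_pos hx _) (Real.rpow_le_rpow hx.le hxy he)

lemma dist_lb {n : ℕ} {cS cJ t : Fin n → ℝ} {ρ L : ℝ}
    (hcJ : ∀ i, |cJ i - cS i| ≤ L / 4)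
    (ht : t ∉ cCube n cS ρ) : ρ - L / 4 < dist t cJ := by
  obtain ⟨i₀, hi₀⟩ : ∃ i, ¬ |t i - cS i| ≤ ρ := by simpa [cCube] using ht
  push_neg at hi₀
  have h1 := abs_sub_abs_le_abs_sub (t i₀ - cS i₀) (cJ i₀ - cS i₀)
  have h2 : t i₀ - cS i₀ - (cJ i₀ - cS i₀) = t i₀ - cJ i₀ := by ring
  rw [h2] at h1
  have h3 := dist_le_pi_dist t cJ i₀
  rw [Real.dist_eq] at h3
  have := hcJ i₀
  linarith

lemma kernel_est {n : ℕ} {α δ CK : ℝ} (hα : 0 < α) (hδ0 : 0 < δ) (hCK : 0 < CK)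
    {K : (Fin n → ℝ) → (Fin n → ℝ) → ℝ}
    (hK : ∀ t x x' : Fin n → ℝ, 2 * dist x x' < dist t x →
      |K t x - K t x'| ≤ CK * (dist x x' / dist t x) ^ δ / dist t x ^ α)
    {cS cJ : Fin n → ℝ} {L lJ : ℝ} (hL : 0 < L) (hlJ : 0 < lJ)
    (hJS : cCube n cJ lJ ⊆ cCube n cS (L / 4))
    {t x : Fin n → ℝ} (ht : t ∉ cCube n cS (L / 2)) (hx : x ∈ cCube n cJ lJ) :
    |K t x - K t cJ| ≤ 2 * CK * 3 ^ (δ + α) * lJ ^ δ * (dist t cJ ^ (δ + α))⁻¹ := by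
  obtain ⟨i₀, hi₀⟩ : ∃ i, ¬ |t i - cS i| ≤ L / 2 := by simpa [cCube] using ht
  push_neg at hi₀
  have hcJc : cJ ∈ cCube n cJ lJ := fun i => by simp [hlJ.le]
  have hcJ : ∀ i, |cJ i - cS i| ≤ L / 4 := hJS hcJc
  have hxS : ∀ i, |x i - cS i| ≤ L / 4 := hJS hx
  have hlJL : lJ ≤ L / 4 := by
    have hmem : ∀ s : ℝ, |s| ≤ lJ → (Function.update cJ i₀ (cJ i₀ + s)) ∈ cCube n cJ lJ := by
      intro s hs i
      rcases eq_or_ne i i₀ with rfl | h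
      · simpa using hs
      · simp [Function.update_of_ne h, hlJ.le]
    have h₁ := (hJS (hmem lJ (by simp [abs_of_pos hlJ]))) i₀
    have h₂ := (hJS (hmem (-lJ) (by simp [abs_of_pos hlJ]))) i₀
    rw [Function.update_self] at h₁ h₂
    have b₁ := (abs_le.1 h₁).2
    have a₂ := (abs_le.1 h₂).1
    linarith
  set m : Fin n → ℝ := fun i => (x i + cJ i) / 2 with hm
  have hmS : ∀ i, |m i - cS i| ≤ L / 4 := by
    intro i
    have h1 := abs_le.1 (hxS i); have h2 := abs_le.1 (hcJ i)
    have hmi : m i = (x i + cJ i) / 2 := rfl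
    rw [hmi, abs_le]
    constructor <;> linarith
  -- distance lower bounds for points in the quarter cube
  have key : ∀ y : Fin n → ℝ, (∀ i, |y i - cS i| ≤ L / 4) →
      L / 4 < dist t y ∧ dist t cJ ≤ 3 * dist t y := by
    intro y hy
    have h1 : L / 4 < |t i₀ - y i₀| := by
      have ha := abs_sub_abs_le_abs_sub (t i₀ - cS i₀) (y i₀ - cS i₀)
      have h2 : t i₀ - cS i₀ - (y i₀ - cS i₀) = t i₀ - y i₀ := by ring
      rw [h2] at ha
      have h3 := hy i₀
      linarith
    have hd1 : L / 4 < dist t y := by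
      have := dist_le_pi_dist t y i₀
      rw [Real.dist_eq] at this
      linarith
    refine ⟨hd1, ?_⟩
    have hyc : dist y cJ ≤ L / 2 := by
      rw [dist_pi_le_iff (by linarith)]
      intro i
      rw [Real.dist_eq, abs_le]
      have h1' := abs_le.1 (hy i); have h2' := abs_le.1 (hcJ i)
      constructor <;> linarith
    have htri := dist_triangle t y cJ
    linarith
  have hr0 : 0 < dist t cJ := lt_trans (by positivity) (key cJ hcJ).1
  -- midpoint distances
  have hxm : dist x m ≤ lJ / 2 := by
    rw [dist_pi_le_iff (by linarith)]
    intro i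
    have h1 : x i - m i = (x i - cJ i) / 2 := by
      have hmi : m i = (x i + cJ i) / 2 := rfl
      rw [hmi]; ring
    rw [Real.dist_eq, h1, abs_div, abs_two]
    have := hx i
    linarith
  have hmc : dist m cJ ≤ lJ / 2 := by
    rw [dist_pi_le_iff (by linarith)]
    intro i
    have h1 : m i - cJ i = (x i - cJ i) / 2 := by
      have hmi : m i = (x i + cJ i) / 2 := rfl
      rw [hmi]; ring
    rw [Real.dist_eq, h1, abs_div, abs_two]
    have := hx i
    linarith
  -- single-term bound
  have term : ∀ y z : Fin n → ℝ, dist y z ≤ lJ → L / 4 < dist t y →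
      dist t cJ ≤ 3 * dist t y →
      CK * (dist y z / dist t y) ^ δ / dist t y ^ α ≤
        CK * 3 ^ (δ + α) * lJ ^ δ * (dist t cJ ^ (δ + α))⁻¹ := by
    intro y z hyz hD hrD
    have hD0 : (0:ℝ) < dist t y := lt_trans (by positivity) hD
    have h1 : (dist y z / dist t y) ^ δ ≤ (lJ / dist t y) ^ δ := by
      apply Real.rpow_le_rpow (by positivity) _ hδ0.le
      gcongr
    have h2 : (lJ / dist t y) ^ δ = lJ ^ δ / dist t y ^ δ := Real.div_rpow hlJ.le hD0.le δ
    have hDδ : (0:ℝ) < dist t y ^ δ := Real.rpow_pos_of_pos hD0 _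
    have hDα : (0:ℝ) < dist t y ^ α := Real.rpow_pos_of_pos hD0 _
    have h3 : CK * (lJ ^ δ / dist t y ^ δ) / dist t y ^ α
        = CK * lJ ^ δ * (dist t y ^ (δ + α))⁻¹ := by
      rw [Real.rpow_add hD0]
      field_simp
    have h4 : (dist t y ^ (δ + α))⁻¹ ≤ 3 ^ (δ + α) * (dist t cJ ^ (δ + α))⁻¹ := by
      have hD3 : dist t cJ / 3 ≤ dist t y := by linarith
      have h5 : (dist t cJ / 3) ^ (δ + α) ≤ dist t y ^ (δ + α) :=
        Real.rpow_le_rpow (by positivity) hD3 (by positivity)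
      rw [Real.div_rpow hr0.le (by norm_num)] at h5
      have h6 := inv_anti₀ (by positivity : (0:ℝ) < dist t cJ ^ (δ + α) / 3 ^ (δ + α)) h5
      rw [inv_div] at h6
      calc (dist t y ^ (δ + α))⁻¹ ≤ 3 ^ (δ + α) / dist t cJ ^ (δ + α) := h6
        _ = 3 ^ (δ + α) * (dist t cJ ^ (δ + α))⁻¹ := by rw [div_eq_mul_inv]
    calc CK * (dist y z / dist t y) ^ δ / dist t y ^ α
        ≤ CK * (lJ / dist t y) ^ δ / dist t y ^ α := by gcongr
      _ = CK * lJ ^ δ * (dist t y ^ (δ + α))⁻¹ := by rw [h2, h3]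
      _ ≤ CK * lJ ^ δ * (3 ^ (δ + α) * (dist t cJ ^ (δ + α))⁻¹) := by
          apply mul_le_mul_of_nonneg_left h4 (by positivity)
      _ = CK * 3 ^ (δ + α) * lJ ^ δ * (dist t cJ ^ (δ + α))⁻¹ := by ring
  have kx := key x hxS
  have km := key m hmS
  have hKa := hK t x m (by
    have := hxm
    linarith [kx.1])
  have hKb := hK t m cJ (by
    have := hmc
    linarith [km.1])
  have tb1 := (hKa.trans (term x m (by linarith) kx.1 kx.2))
  have tb2 := (hKb.trans (term m cJ (by linarith) km.1 km.2))
  have tri := abs_sub_le (K t x) (K t m) (K t cJ)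
  calc |K t x - K t cJ| ≤ |K t x - K t m| + |K t m - K t cJ| := tri
    _ ≤ CK * 3 ^ (δ + α) * lJ ^ δ * (dist t cJ ^ (δ + α))⁻¹
        + CK * 3 ^ (δ + α) * lJ ^ δ * (dist t cJ ^ (δ + α))⁻¹ := add_le_add tb1 tb2
    _ = 2 * CK * 3 ^ (δ + α) * lJ ^ δ * (dist t cJ ^ (δ + α))⁻¹ := by ring

lemma core_ineq {α δ L : ℝ} (hα : 0 < α) (hδ0 : 0 < δ) (hδ1 : δ ≤ 1) (hL : 0 < L)
    {u : ℝ} (hu : 1 ≤ u) :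
    ((u * L / 4) ^ (-(δ + α)) - ((u + 1) * L / 4) ^ (-(δ + α))) *
      (((u + 1) * L) ^ α * (u + 1) ^ (δ / 2 + 1)) ≤
    ((δ + α) + 1) * 4 ^ (δ + α) * 2 ^ (α + δ / 2 + 1) * (L ^ δ)⁻¹ := by
  have hu0 : (0:ℝ) < u := lt_of_lt_of_le one_pos hu
  have hu1 : (0:ℝ) < u + 1 := by linarith
  -- step A : difference bound
  have hs0 : (0:ℝ) < u / (u + 1) := by positivity
  have hs1 : u / (u + 1) ≤ 1 := by
    rw [div_le_one hu1]; linarith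
  have hrep : (u + 1) * L / 4 = (u * L / 4) / (u / (u + 1)) := by
    field_simp
  have hsplit : ((u + 1) * L / 4) ^ (-(δ + α))
      = (u * L / 4) ^ (-(δ + α)) * (u / (u + 1)) ^ (δ + α) := by
    rw [hrep, Real.div_rpow (by positivity) hs0.le, Real.rpow_neg hs0.le,
      div_eq_mul_inv, inv_inv]
  have hbern : 1 - (u / (u + 1)) ^ (δ + α) ≤ ((δ + α) + 1) * u⁻¹ := by
    have h1 : (u / (u + 1)) ^ ((δ + α) + 1) ≤ (u / (u + 1)) ^ (δ + α) :=
      Real.rpow_le_rpow_of_exponent_ge hs0 hs1 (by linarith)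
    have h2 : 1 + ((δ + α) + 1) * (u / (u + 1) - 1) ≤ (u / (u + 1)) ^ ((δ + α) + 1) := by
      have := one_add_mul_self_le_rpow_one_add
        (s := u / (u + 1) - 1) (p := (δ + α) + 1) (by linarith) (by linarith)
      simpa using this
    have h3 : 1 - u / (u + 1) = 1 / (u + 1) := by field_simp; ring
    have h4 : (1:ℝ) / (u + 1) ≤ 1 / u := one_div_le_one_div_of_le hu0 (by linarith)
    have h5 : ((δ + α) + 1) * (1 / (u + 1)) ≤ ((δ + α) + 1) * (1 / u) :=
      mul_le_mul_of_nonneg_left h4 (by positivity)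
    have h6 : (1:ℝ) / u = u⁻¹ := one_div u
    nlinarith [h1, h2]
  have hstepA : (u * L / 4) ^ (-(δ + α)) - ((u + 1) * L / 4) ^ (-(δ + α))
      ≤ (u * L / 4) ^ (-(δ + α)) * (((δ + α) + 1) * u⁻¹) := by
    rw [hsplit]
    have he : (u * L / 4) ^ (-(δ + α)) - (u * L / 4) ^ (-(δ + α)) * (u / (u + 1)) ^ (δ + α)
        = (u * L / 4) ^ (-(δ + α)) * (1 - (u / (u + 1)) ^ (δ + α)) := by ring
    rw [he]
    exact mul_le_mul_of_nonneg_left hbern (by positivity)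
  -- step B : collecting powers
  have key : (u * L / 4) ^ (-(δ + α)) * (((u + 1) * L) ^ α * (u + 1) ^ (δ / 2 + 1)) * u⁻¹
      ≤ 4 ^ (δ + α) * 2 ^ (α + δ / 2 + 1) * (L ^ δ)⁻¹ := by
    have e1 : (u * L / 4) ^ (-(δ + α)) = u ^ (-(δ + α)) * (L ^ (-(δ + α)) * 4 ^ (δ + α)) := by
      rw [show u * L / 4 = u * (L / 4) by ring,
        Real.mul_rpow hu0.le (by positivity),
        Real.div_rpow hL.le (by norm_num : (0:ℝ) ≤ 4),
        Real.rpow_neg (by norm_num : (0:ℝ) ≤ 4), div_eq_mul_inv, inv_inv]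
    have e2 : ((u + 1) * L) ^ α = (u + 1) ^ α * L ^ α := Real.mul_rpow hu1.le hL.le
    have eL : L ^ (-(δ + α)) * L ^ α = (L ^ δ)⁻¹ := by
      rw [← Real.rpow_add hL, ← Real.rpow_neg hL.le]
      norm_num
    have e3 : (u + 1) ^ α * (u + 1) ^ (δ / 2 + 1) = (u + 1) ^ (α + (δ / 2 + 1)) :=
      (Real.rpow_add hu1 _ _).symm
    have e4 : (u + 1) ^ (α + (δ / 2 + 1)) ≤ 2 ^ (α + (δ / 2 + 1)) * u ^ (α + (δ / 2 + 1)) := by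
      rw [← Real.mul_rpow (by norm_num) hu0.le]
      exact Real.rpow_le_rpow (by positivity) (by linarith) (by positivity)
    have eu : u ^ (-(δ + α)) * u⁻¹ * u ^ (α + (δ / 2 + 1)) = u ^ (-(δ / 2)) := by
      rw [← Real.rpow_neg_one u, ← Real.rpow_add hu0, ← Real.rpow_add hu0]
      ring_nf
    have eone : u ^ (-(δ / 2)) ≤ 1 :=
      Real.rpow_le_one_of_one_le_of_nonpos hu (by linarith)
    calc (u * L / 4) ^ (-(δ + α)) * (((u + 1) * L) ^ α * (u + 1) ^ (δ / 2 + 1)) * u⁻¹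
        = (4 ^ (δ + α) * (L ^ (-(δ + α)) * L ^ α)) *
            ((u ^ (-(δ + α)) * u⁻¹) * ((u + 1) ^ α * (u + 1) ^ (δ / 2 + 1))) := by
          rw [e1, e2]; ring
      _ = (4 ^ (δ + α) * (L ^ δ)⁻¹) * ((u ^ (-(δ + α)) * u⁻¹) * (u + 1) ^ (α + (δ / 2 + 1))) := by
          rw [eL, e3]
      _ ≤ (4 ^ (δ + α) * (L ^ δ)⁻¹) *
            ((u ^ (-(δ + α)) * u⁻¹) * (2 ^ (α + (δ / 2 + 1)) * u ^ (α + (δ / 2 + 1)))) := by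
          apply mul_le_mul_of_nonneg_left _ (by positivity)
          apply mul_le_mul_of_nonneg_left e4 (by positivity)
      _ = (4 ^ (δ + α) * (L ^ δ)⁻¹) * 2 ^ (α + (δ / 2 + 1)) *
            (u ^ (-(δ + α)) * u⁻¹ * u ^ (α + (δ / 2 + 1))) := by ring
      _ = (4 ^ (δ + α) * (L ^ δ)⁻¹) * 2 ^ (α + (δ / 2 + 1)) * u ^ (-(δ / 2)) := by rw [eu]
      _ ≤ (4 ^ (δ + α) * (L ^ δ)⁻¹) * 2 ^ (α + (δ / 2 + 1)) * 1 := by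
          apply mul_le_mul_of_nonneg_left eone (by positivity)
      _ = 4 ^ (δ + α) * 2 ^ (α + δ / 2 + 1) * (L ^ δ)⁻¹ := by
          rw [show α + (δ / 2 + 1) = α + δ / 2 + 1 by ring]; ring
  -- combine
  calc ((u * L / 4) ^ (-(δ + α)) - ((u + 1) * L / 4) ^ (-(δ + α))) *
        (((u + 1) * L) ^ α * (u + 1) ^ (δ / 2 + 1))
      ≤ ((u * L / 4) ^ (-(δ + α)) * (((δ + α) + 1) * u⁻¹)) *
        (((u + 1) * L) ^ α * (u + 1) ^ (δ / 2 + 1)) := by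
        apply mul_le_mul_of_nonneg_right hstepA (by positivity)
    _ = ((δ + α) + 1) *
        ((u * L / 4) ^ (-(δ + α)) * (((u + 1) * L) ^ α * (u + 1) ^ (δ / 2 + 1)) * u⁻¹) := by
        ring
    _ ≤ ((δ + α) + 1) * (4 ^ (δ + α) * 2 ^ (α + δ / 2 + 1) * (L ^ δ)⁻¹) :=
        mul_le_mul_of_nonneg_left key (by positivity)
    _ = ((δ + α) + 1) * 4 ^ (δ + α) * 2 ^ (α + δ / 2 + 1) * (L ^ δ)⁻¹ := by ring

set_option maxHeartbeats 1000000 in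
/-- For a Calderón–Zygmund kernel `K` with parameters `δ, α`, a cube
`S` (center `cS`, side `L`), a mean-zero bump `h_J` supported in `Ĵ ⊆ (1/2)S` with
`‖h_J‖_{L¹(μ)} ≤ μ(Ĵ)^{1/2}`, and any larger cube `Q ⊇ S`,
`|∫_{Q∖S} ∫ K(t,x) h_J(x) dμ(x) dμ(t)| ≲ (ℓ(J)/ℓ(S))^δ μ(Ĵ)^{1/2} ρ(S)`,
where `ρ(S) = Σ_{m≥1} μ(mS)/(ℓ(mS)^α m^{δ/2+1})`. -/
theorem stmt12 (n : ℕ) (α δ CK : ℝ) (hα : 0 < α) (hδ0 : 0 < δ) (hδ1 : δ ≤ 1)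
    (hCK : 0 < CK) :
    ∃ C : ℝ≥0∞, C ≠ ⊤ ∧
      ∀ (μ : Measure (Fin n → ℝ)) (K : (Fin n → ℝ) → (Fin n → ℝ) → ℝ)
        (cS : Fin n → ℝ) (L : ℝ) (Q : Set (Fin n → ℝ))
        (cJ : Fin n → ℝ) (lJ : ℝ) (hJ : (Fin n → ℝ) → ℝ),
        0 < L → 0 < lJ →
        (∀ t x x' : Fin n → ℝ, 2 * dist x x' < dist t x →
          |K t x - K t x'| ≤ CK * (dist x x' / dist t x) ^ δ / dist t x ^ α) →
        cCube n cS (L / 2) ⊆ Q → MeasurableSet Q →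
        cCube n cJ lJ ⊆ cCube n cS (L / 4) →
        μ (cCube n cJ lJ) ≠ ⊤ →
        Integrable hJ μ →
        (∀ x ∉ cCube n cJ lJ, hJ x = 0) →
        (∫ x, hJ x ∂μ) = 0 →
        (∫ x, |hJ x| ∂μ) ≤ Real.sqrt (μ (cCube n cJ lJ)).toReal →
        ENNReal.ofReal |∫ t in Q \ cCube n cS (L / 2), (∫ x, K t x * hJ x ∂μ) ∂μ|
          ≤ C * ENNReal.ofReal ((lJ / L) ^ δ *
              Real.sqrt (μ (cCube n cJ lJ)).toReal) *
            ∑' m : ℕ, μ (cCube n cS (((m : ℝ) + 1) * L / 2)) /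
              ENNReal.ofReal ((((m : ℝ) + 1) * L) ^ α * ((m : ℝ) + 1) ^ (δ / 2 + 1)) := by
  classical
  set c1 : ℝ := 2 * CK * 3 ^ (δ + α) with hc1
  have hc10 : 0 < c1 := by positivity
  set K2 : ℝ := ((δ + α) + 1) * 4 ^ (δ + α) * 2 ^ (α + δ / 2 + 1) with hK2
  have hK20 : 0 < K2 := by positivity
  set Cc : ℝ := c1 * K2 with hCc
  have hCc0 : 0 < Cc := by positivity
  refine ⟨ENNReal.ofReal Cc, ENNReal.ofReal_ne_top, ?_⟩
  intro μ K cS L Q cJ lJ hJ hL hlJ hKest hSQ hQmeas hJS hμJ hJint hsupp hmean hL1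
  set M : ℝ := Real.sqrt (μ (cCube n cJ lJ)).toReal with hM
  have hM0 : 0 ≤ M := Real.sqrt_nonneg _
  set c : ℝ := c1 * lJ ^ δ * M with hc
  have hc0 : 0 ≤ c := by positivity
  set B : ℕ → Set (Fin n → ℝ) := fun m => cCube n cS ((m : ℝ) * L / 2) with hB
  set A : ℕ → Set (Fin n → ℝ) := fun k => B (k + 2) \ B (k + 1) with hA
  have hBmeas : ∀ m, MeasurableSet (B m) := fun m => measurableSet_cCube
  have hAmeas : ∀ k, MeasurableSet (A k) := fun k => (hBmeas _).diff (hBmeas _)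
  have hBmono : ∀ {m m' : ℕ}, m ≤ m' → B m ⊆ B m' := by
    intro m m' h
    apply cCube_mono
    have h1 : (m : ℝ) ≤ (m' : ℝ) := Nat.cast_le.2 h
    have h2 := mul_le_mul_of_nonneg_right h1 hL.le
    linarith
  have hS1 : B 1 = cCube n cS (L / 2) := by
    simp only [hB, Nat.cast_one, one_mul]
  have hcJc : cJ ∈ cCube n cJ lJ := fun i => by simp [hlJ.le]
  have hcJq : ∀ i, |cJ i - cS i| ≤ L / 4 := hJS hcJc
  set a : ℕ → ℝ := fun k => (((k : ℝ) + 1) * L / 4) ^ (-(δ + α)) with ha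
  have hapos : ∀ k : ℕ, (0:ℝ) < ((k : ℝ) + 1) * L / 4 := fun k => by positivity
  set d : ℕ → ℝ := fun j => a j - a (j + 1) with hd
  have hamono : ∀ j : ℕ, a (j + 1) ≤ a j := by
    intro j
    simp only [ha]
    apply rpow_neg_anti (hapos j) _ (by positivity)
    push_cast
    have := mul_le_mul_of_nonneg_right
      (by linarith : (j : ℝ) + 1 ≤ (j : ℝ) + 1 + 1) hL.le
    linarith
  have hd0 : ∀ j, 0 ≤ d j := fun j => sub_nonneg.2 (hamono j)
  -- inner integral bound
  have innerb : ∀ t, t ∉ cCube n cS (L / 2) →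
      |∫ x, K t x * hJ x ∂μ| ≤ c * (dist t cJ ^ (δ + α))⁻¹ := by
    intro t ht
    have hr4 : L / 4 < dist t cJ := by
      have := dist_lb hcJq ht
      linarith
    have hr0 : (0:ℝ) < dist t cJ := lt_trans (by positivity) hr4
    have hrb : (0:ℝ) < dist t cJ ^ (δ + α) := Real.rpow_pos_of_pos hr0 _
    by_cases hint : Integrable (fun x => K t x * hJ x) μ
    · have hint1 : Integrable (fun x => K t cJ * hJ x) μ := hJint.const_mul _
      have hint2 : Integrable (fun x => (K t x - K t cJ) * hJ x) μ := by
        have h := hint.sub hint1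
        simpa [Pi.sub_def, sub_mul] using h
      have heq : (∫ x, K t x * hJ x ∂μ) = ∫ x, (K t x - K t cJ) * hJ x ∂μ := by
        have he : (fun x => (K t x - K t cJ) * hJ x)
            = fun x => K t x * hJ x - K t cJ * hJ x := by
          funext x; ring
        rw [he, integral_sub hint hint1, integral_const_mul, hmean, mul_zero, sub_zero]
      rw [heq]
      have habs : |∫ x, (K t x - K t cJ) * hJ x ∂μ| ≤ ∫ x, |(K t x - K t cJ) * hJ x| ∂μ := by
        have h := norm_integral_le_integral_norm (μ := μ) (fun x => (K t x - K t cJ) * hJ x)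
        simp only [Real.norm_eq_abs] at h
        exact h
      have hptx : ∀ x, |(K t x - K t cJ) * hJ x|
          ≤ (c1 * lJ ^ δ * (dist t cJ ^ (δ + α))⁻¹) * |hJ x| := by
        intro x
        rw [abs_mul]
        by_cases hxJ : x ∈ cCube n cJ lJ
        · refine mul_le_mul_of_nonneg_right ?_ (abs_nonneg _)
          have := kernel_est hα hδ0 hCK hKest hL hlJ hJS ht hxJ
          calc |K t x - K t cJ| ≤ 2 * CK * 3 ^ (δ + α) * lJ ^ δ * (dist t cJ ^ (δ + α))⁻¹ :=
              this
            _ = c1 * lJ ^ δ * (dist t cJ ^ (δ + α))⁻¹ := by rw [hc1]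
        · rw [hsupp x hxJ]
          simp
      have hmono : (∫ x, |(K t x - K t cJ) * hJ x| ∂μ)
          ≤ ∫ x, (c1 * lJ ^ δ * (dist t cJ ^ (δ + α))⁻¹) * |hJ x| ∂μ :=
        integral_mono hint2.abs ((hJint.abs).const_mul _) hptx
      have hml : (∫ x, (c1 * lJ ^ δ * (dist t cJ ^ (δ + α))⁻¹) * |hJ x| ∂μ)
          = (c1 * lJ ^ δ * (dist t cJ ^ (δ + α))⁻¹) * ∫ x, |hJ x| ∂μ :=
        integral_const_mul _ _
      have hlast : (c1 * lJ ^ δ * (dist t cJ ^ (δ + α))⁻¹) * (∫ x, |hJ x| ∂μ)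
          ≤ (c1 * lJ ^ δ * (dist t cJ ^ (δ + α))⁻¹) * M :=
        mul_le_mul_of_nonneg_left hL1 (by positivity)
      have : c * (dist t cJ ^ (δ + α))⁻¹ = (c1 * lJ ^ δ * (dist t cJ ^ (δ + α))⁻¹) * M := by
        rw [hc]; ring
      rw [this]
      linarith
    · rw [integral_undef hint]
      simp only [abs_zero]
      positivity
  -- per shell pointwise bound
  have shellb : ∀ k : ℕ, ∀ t ∈ A k,
      (‖∫ x, K t x * hJ x ∂μ‖₊ : ℝ≥0∞) ≤ ENNReal.ofReal (c * a k) := by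
    intro k t htk
    have ht1 : t ∉ B (k + 1) := htk.2
    have htS : t ∉ cCube n cS (L / 2) := by
      intro hmem
      exact ht1 (hBmono (by omega) (hS1 ▸ hmem))
    have hrk : ((k : ℝ) + 1) * L / 4 ≤ dist t cJ := by
      have hdd : ((k + 1 : ℕ) : ℝ) * L / 2 - L / 4 < dist t cJ := dist_lb hcJq ht1
      push_cast at hdd
      have hkL : (0:ℝ) ≤ (k : ℝ) * L := by positivity
      linarith
    have hr0 : (0:ℝ) < dist t cJ := lt_of_lt_of_le (hapos k) hrk
    have hmono2 : c * (dist t cJ ^ (δ + α))⁻¹ ≤ c * a k := by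
      apply mul_le_mul_of_nonneg_left _ hc0
      simp only [ha]
      rw [← Real.rpow_neg hr0.le]
      exact rpow_neg_anti (hapos k) hrk (by positivity)
    have hb := (innerb t htS).trans hmono2
    calc (‖∫ x, K t x * hJ x ∂μ‖₊ : ℝ≥0∞)
        = ENNReal.ofReal |∫ x, K t x * hJ x ∂μ| := by
          rw [← Real.norm_eq_abs]; exact (ofReal_norm _).symm
      _ ≤ ENNReal.ofReal (c * a k) := ENNReal.ofReal_le_ofReal hb
  -- covering
  have hcover : Q \ cCube n cS (L / 2) ⊆ ⋃ k, A k := by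
    intro t ht
    have ht1 : t ∉ B 1 := by rw [hS1]; exact ht.2
    have hex : ∃ k : ℕ, t ∈ B (k + 2) := by
      obtain ⟨m, hm⟩ := exists_nat_ge (dist t cS * 2 / L)
      refine ⟨m, fun i => ?_⟩
      have h1 : |t i - cS i| ≤ dist t cS := by
        have := dist_le_pi_dist t cS i
        rwa [Real.dist_eq] at this
      have h2 : dist t cS ≤ (m : ℝ) * L / 2 := by
        rw [div_le_iff₀ hL] at hm
        linarith
      show |t i - cS i| ≤ ((m + 2 : ℕ) : ℝ) * L / 2
      push_cast
      nlinarith [hL.le]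
    have hnot : t ∉ B (Nat.find hex + 1) := by
      rcases Nat.eq_zero_or_pos (Nat.find hex) with h | h
      · rw [h]; exact ht1
      · have h2 := Nat.find_min hex (Nat.sub_lt h one_pos)
        have h3 : Nat.find hex - 1 + 2 = Nat.find hex + 1 := by omega
        rwa [h3] at h2
    exact mem_iUnion.2 ⟨Nat.find hex, Nat.find_spec hex, hnot⟩
  -- disjointness
  have hAdisj : ∀ k l : ℕ, k < l → Disjoint (A k) (A l) := by
    intro k l hkl
    apply Set.disjoint_left.2
    intro t htk htl
    exact htl.2 (hBmono (by omega) htk.1)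
  -- Abel: a k ≤ tail sums of d
  have haK0 : Filter.Tendsto a Filter.atTop (nhds 0) := by
    have h1 : Filter.Tendsto (fun k : ℕ => ((k : ℝ) + 1) * (L / 4)) Filter.atTop Filter.atTop :=
      (Filter.tendsto_atTop_add_const_right _ 1 tendsto_natCast_atTop_atTop).atTop_mul_const
        (by positivity)
    have h2 := (tendsto_rpow_neg_atTop (by positivity : (0:ℝ) < δ + α)).comp h1
    refine h2.congr fun k => ?_
    show (((k : ℝ) + 1) * (L / 4)) ^ (-(δ + α)) = a k
    simp only [ha]
    rw [mul_div_assoc]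
  have habel : ∀ k : ℕ, ENNReal.ofReal (c * a k)
      ≤ ∑' j, (if k ≤ j then ENNReal.ofReal (c * d j) else 0) := by
    intro k
    have htend : Filter.Tendsto (fun N : ℕ => ENNReal.ofReal (c * (a k - a N))) Filter.atTop
        (nhds (ENNReal.ofReal (c * a k))) := by
      apply (ENNReal.continuous_ofReal.tendsto _).comp
      have h1 : Filter.Tendsto (fun N : ℕ => a k - a N) Filter.atTop (nhds (a k - 0)) :=
        tendsto_const_nhds.sub haK0
      rw [sub_zero] at h1
      exact h1.const_mul c
    refine le_of_tendsto htend ?_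
    filter_upwards [Filter.eventually_ge_atTop k] with N hkN
    have hsum : ∑ j ∈ Finset.Ico k N, d j = a k - a N := by
      rw [Finset.sum_Ico_eq_sum_range]
      have h1 : ∀ i ∈ Finset.range (N - k), d (k + i)
          = (fun i => a (k + i)) i - (fun i => a (k + i)) (i + 1) := by
        intro i _
        have hni : k + i + 1 = k + (i + 1) := by omega
        simp only [hd, hni]
      rw [Finset.sum_congr rfl h1, Finset.sum_range_sub' (fun i => a (k + i)) (N - k)]
      simp [Nat.add_sub_cancel' hkN]
    calc ENNReal.ofReal (c * (a k - a N))
        = ∑ j ∈ Finset.Ico k N, ENNReal.ofReal (c * d j) := by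
          rw [← hsum, Finset.mul_sum, ENNReal.ofReal_sum_of_nonneg]
          intro j _
          exact mul_nonneg hc0 (hd0 j)
      _ = ∑ j ∈ Finset.Ico k N, (if k ≤ j then ENNReal.ofReal (c * d j) else 0) := by
          refine Finset.sum_congr rfl fun j hj => ?_
          rw [if_pos (Finset.mem_Ico.1 hj).1]
      _ ≤ ∑' j, (if k ≤ j then ENNReal.ofReal (c * d j) else 0) := ENNReal.sum_le_tsum _
  -- Abel summation
  have hABel2 : (∑' k, ENNReal.ofReal (c * a k) * μ (A k))
      ≤ ∑' j, ENNReal.ofReal (c * d j) * μ (B (j + 2)) := by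
    calc ∑' k, ENNReal.ofReal (c * a k) * μ (A k)
        ≤ ∑' k, (∑' j, (if k ≤ j then ENNReal.ofReal (c * d j) else 0)) * μ (A k) :=
          ENNReal.tsum_le_tsum fun k => mul_le_mul_left (habel k) _
      _ = ∑' k, ∑' j, (if k ≤ j then ENNReal.ofReal (c * d j) else 0) * μ (A k) :=
          tsum_congr fun k => by rw [ENNReal.tsum_mul_right]
      _ = ∑' j, ∑' k, (if k ≤ j then ENNReal.ofReal (c * d j) else 0) * μ (A k) :=
          ENNReal.tsum_comm
      _ = ∑' j, ENNReal.ofReal (c * d j) * ∑' k, (if k ≤ j then μ (A k) else 0) := by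
          refine tsum_congr fun j => ?_
          rw [← ENNReal.tsum_mul_left]
          refine tsum_congr fun k => ?_
          by_cases h : k ≤ j
          · simp [h]
          · simp [h]
      _ ≤ ∑' j, ENNReal.ofReal (c * d j) * μ (B (j + 2)) := by
          refine ENNReal.tsum_le_tsum fun j => mul_le_mul_right ?_ _
          have h0 : (∑' k, (if k ≤ j then μ (A k) else 0))
              = ∑ k ∈ Finset.range (j + 1), μ (A k) := by
            rw [tsum_eq_sum (s := Finset.range (j + 1))
              (fun k hk => if_neg (fun h => hk (Finset.mem_range.2 (Nat.lt_succ_of_le h))))]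
            exact Finset.sum_congr rfl fun k hk =>
              if_pos (Nat.lt_succ_iff.1 (Finset.mem_range.1 hk))
          have hdisj : (↑(Finset.range (j + 1)) : Set ℕ).PairwiseDisjoint A := by
            intro k _ l _ hkl
            rcases lt_or_gt_of_ne hkl with h | h
            · exact hAdisj k l h
            · exact (hAdisj l k h).symm
          rw [h0, ← measure_biUnion_finset hdisj (fun k _ => hAmeas k)]
          refine measure_mono (Set.iUnion₂_subset fun k hk => ?_)
          have hk' : k + 2 ≤ j + 2 := by
            have := Finset.mem_range.1 hk; omega
          exact Set.Subset.trans Set.diff_subset (hBmono hk')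
  -- termwise comparison with the density sum
  set T : ℕ → ℝ≥0∞ := fun m => μ (cCube n cS (((m : ℝ) + 1) * L / 2)) /
      ENNReal.ofReal ((((m : ℝ) + 1) * L) ^ α * ((m : ℝ) + 1) ^ (δ / 2 + 1)) with hT
  have hterm : ∀ j : ℕ, ENNReal.ofReal (c * d j) * μ (B (j + 2))
      ≤ ENNReal.ofReal Cc * ENNReal.ofReal ((lJ / L) ^ δ * M) * T (j + 1) := by
    intro j
    set u : ℝ := (j : ℝ) + 1 with hu
    have hu1 : (1:ℝ) ≤ u := by simp [hu]
    set w : ℝ := ((u + 1) * L) ^ α * (u + 1) ^ (δ / 2 + 1) with hw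
    have hw0 : 0 < w := by positivity
    have hTj : T (j + 1) = μ (B (j + 2)) / ENNReal.ofReal w := by
      simp only [hT, hB, hw, hu]
      have h1 : ((j + 1 : ℕ) : ℝ) + 1 = (j : ℝ) + 1 + 1 := by push_cast; ring
      have h2 : ((j + 2 : ℕ) : ℝ) = (j : ℝ) + 1 + 1 := by push_cast; ring
      rw [h1, h2]
    have hdw : d j * w ≤ K2 * (L ^ δ)⁻¹ := by
      have hco := core_ineq hα hδ0 hδ1 hL hu1
      have hd1 : d j = (u * L / 4) ^ (-(δ + α)) - ((u + 1) * L / 4) ^ (-(δ + α)) := by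
        simp only [hd, ha, hu]
        congr 2
        push_cast; ring
      rw [hd1, hw, hK2]
      exact hco
    have hreal : c * d j * w ≤ Cc * ((lJ / L) ^ δ * M) := by
      have h1 : c * d j * w = (c1 * lJ ^ δ * M) * (d j * w) := by rw [hc]; ring
      have h2 : (c1 * lJ ^ δ * M) * (d j * w) ≤ (c1 * lJ ^ δ * M) * (K2 * (L ^ δ)⁻¹) :=
        mul_le_mul_of_nonneg_left hdw (by positivity)
      have h3 : Cc * ((lJ / L) ^ δ * M) = (c1 * lJ ^ δ * M) * (K2 * (L ^ δ)⁻¹) := by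
        rw [hCc, Real.div_rpow hlJ.le hL.le, div_eq_mul_inv]
        ring
      rw [h1, h3]
      exact h2
    have hWne : ENNReal.ofReal w ≠ 0 := by
      simp [ENNReal.ofReal_eq_zero, not_le, hw0]
    have hWnt : ENNReal.ofReal w ≠ ⊤ := ENNReal.ofReal_ne_top
    rw [hTj]
    calc ENNReal.ofReal (c * d j) * μ (B (j + 2))
        = ENNReal.ofReal (c * d j) * (μ (B (j + 2)) / ENNReal.ofReal w * ENNReal.ofReal w) := by
          rw [ENNReal.div_mul_cancel hWne hWnt]
      _ = (ENNReal.ofReal (c * d j) * ENNReal.ofReal w)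
            * (μ (B (j + 2)) / ENNReal.ofReal w) := by ring
      _ ≤ (ENNReal.ofReal Cc * ENNReal.ofReal ((lJ / L) ^ δ * M))
            * (μ (B (j + 2)) / ENNReal.ofReal w) := by
          apply mul_le_mul_left
          rw [← ENNReal.ofReal_mul (mul_nonneg hc0 (hd0 j)),
            ← ENNReal.ofReal_mul hCc0.le]
          exact ENNReal.ofReal_le_ofReal hreal
      _ = ENNReal.ofReal Cc * ENNReal.ofReal ((lJ / L) ^ δ * M)
            * (μ (B (j + 2)) / ENNReal.ofReal w) := by ring
  -- per-shell integral bound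
  have shellint : ∀ k : ℕ, (∫⁻ t in A k, ‖∫ x, K t x * hJ x ∂μ‖₊ ∂μ)
      ≤ ENNReal.ofReal (c * a k) * μ (A k) := by
    intro k
    calc (∫⁻ t in A k, ‖∫ x, K t x * hJ x ∂μ‖₊ ∂μ)
        ≤ ∫⁻ _ in A k, ENNReal.ofReal (c * a k) ∂μ := by
          apply lintegral_mono_ae
          rw [ae_restrict_iff' (hAmeas k)]
          exact ae_of_all _ (shellb k)
      _ = ENNReal.ofReal (c * a k) * μ (A k) := setLIntegral_const _ _
  -- main chain
  calc ENNReal.ofReal |∫ t in Q \ cCube n cS (L / 2), (∫ x, K t x * hJ x ∂μ) ∂μ|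
      = (‖∫ t in Q \ cCube n cS (L / 2), (∫ x, K t x * hJ x ∂μ) ∂μ‖₊ : ℝ≥0∞) := by
        rw [← Real.norm_eq_abs]; exact ofReal_norm _
    _ ≤ ∫⁻ t in Q \ cCube n cS (L / 2), ‖∫ x, K t x * hJ x ∂μ‖₊ ∂μ :=
        enorm_integral_le_lintegral_enorm _
    _ ≤ ∫⁻ t in ⋃ k, A k, ‖∫ x, K t x * hJ x ∂μ‖₊ ∂μ := lintegral_mono_set hcover
    _ ≤ ∑' k, ∫⁻ t in A k, ‖∫ x, K t x * hJ x ∂μ‖₊ ∂μ := lintegral_iUnion_le _ _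
    _ ≤ ∑' k, ENNReal.ofReal (c * a k) * μ (A k) := ENNReal.tsum_le_tsum shellint
    _ ≤ ∑' j, ENNReal.ofReal (c * d j) * μ (B (j + 2)) := hABel2
    _ ≤ ∑' j, ENNReal.ofReal Cc * ENNReal.ofReal ((lJ / L) ^ δ * M) * T (j + 1) :=
        ENNReal.tsum_le_tsum hterm
    _ = ENNReal.ofReal Cc * ENNReal.ofReal ((lJ / L) ^ δ * M) * ∑' j, T (j + 1) := by
        rw [ENNReal.tsum_mul_left]
    _ ≤ ENNReal.ofReal Cc * ENNReal.ofReal ((lJ / L) ^ δ * M) * ∑' m, T m := by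
        apply mul_le_mul_right
        exact ENNReal.tsum_comp_le_tsum_of_injective (fun a b h => by omega) T
end
end

section
/- Let μ be a positive Radon measure and P a dyadic cube. Define the bad part b_P = f𝟙_P − ⟨f𝟙_P⟩_{P̂} 𝟙_{P̂}, where P̂ is the parent of P. Then for a dyadic cube I (of the same grid): (a) if P̂ ∩ Î = ∅ then ⟨b_P, h_I⟩ = 0; (b) if P̂ ⊊ Î then ⟨b_P, h_I⟩ = 0; (c) if Î ⊆ P' for a child P' of P̂ with P' ≠ P, then ⟨b_P, h_I⟩ = 0. Moreover, when ⟨b_P, h_I⟩ ≠ 0 one has the bound |⟨b_P, h_I⟩| ≲ μ(I)^{-1/2} ‖f𝟙_{P ∩ Î}‖_{L¹(μ)}. -/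
open MeasureTheory Set
open scoped ENNReal

noncomputable section

/-- Half-open dyadic cube `∏ᵢ 2^{-k}[jᵢ, jᵢ+1)` of side length `2^(-k)`. -/
def dyadicCube (n : ℕ) (k : ℤ) (j : Fin n → ℤ) : Set (Fin n → ℝ) :=
  {x | ∀ i, (j i : ℝ) * (2:ℝ) ^ (-k) ≤ x i ∧ x i < ((j i : ℝ) + 1) * (2:ℝ) ^ (-k)}

/-- The `μ`-average of `f` over `A` (zero when `μ(A) = 0`). -/
def avgOn {X : Type*} [MeasurableSpace X] (μ : Measure X) (f : X → ℝ) (A : Set X) : ℝ :=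
  if μ A = 0 then 0 else (μ A).toReal⁻¹ * ∫ x in A, f x ∂μ

/-- The Haar function adapted to `I` with parent `Ih` (zero when `μ(I) = 0`). -/
def haarFn {X : Type*} [MeasurableSpace X] (μ : Measure X) (I Ih : Set X) : X → ℝ :=
  fun x => if μ I = 0 then 0 else
    Real.sqrt (μ I).toReal * ((μ I).toReal⁻¹ * Set.indicator I (fun _ => (1:ℝ)) x -
      (μ Ih).toReal⁻¹ * Set.indicator Ih (fun _ => (1:ℝ)) x)

/-- The bad part `b_P = f𝟙_P − ⟨f𝟙_P⟩_{P̂} 𝟙_{P̂}` of a Calderón–Zygmund decomposition. -/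
def badPart {X : Type*} [MeasurableSpace X] (μ : Measure X) (f : X → ℝ)
    (P Ph : Set X) : X → ℝ :=
  fun x => Set.indicator P f x -
    avgOn μ (Set.indicator P f) Ph * Set.indicator Ph (fun _ => (1:ℝ)) x



lemma int_lt_of_scale {a b : ℤ} {s x : ℝ} (hs : 0 < s) (h1 : (a:ℝ) * s ≤ x) (h2 : x < (b:ℝ) * s) :
    a < b := by
  have : (a:ℝ) * s < (b:ℝ) * s := lt_of_le_of_lt h1 h2
  exact_mod_cast lt_of_mul_lt_mul_right this hs.le

lemma scale_eq {k k' : ℤ} (hk : k' ≤ k) :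
    (2:ℝ) ^ (-k') = ((2:ℤ) ^ ((k - k').toNat) : ℤ) * (2:ℝ) ^ (-k) := by
  push_cast
  rw [← zpow_natCast (2:ℝ) ((k - k').toNat), Int.toNat_of_nonneg (by omega), ← zpow_add₀ (by norm_num : (2:ℝ) ≠ 0)]
  ring_nf

lemma oneD {k k' : ℤ} (hk : k' ≤ k) {j j' : ℤ} {x y : ℝ}
    (h1a : (j:ℝ) * 2 ^ (-k) ≤ x) (h1b : x < ((j:ℝ) + 1) * 2 ^ (-k))
    (h2a : (j':ℝ) * 2 ^ (-k') ≤ x) (h2b : x < ((j':ℝ) + 1) * 2 ^ (-k'))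
    (hya : (j:ℝ) * 2 ^ (-k) ≤ y) (hyb : y < ((j:ℝ) + 1) * 2 ^ (-k)) :
    (j':ℝ) * 2 ^ (-k') ≤ y ∧ y < ((j':ℝ) + 1) * 2 ^ (-k') := by
  have hs : (0:ℝ) < 2 ^ (-k) := by positivity
  set N : ℤ := (2:ℤ) ^ ((k - k').toNat) with hN
  have hsc : (2:ℝ) ^ (-k') = (N:ℝ) * 2 ^ (-k) := scale_eq hk
  have e1 : (j':ℝ) * 2 ^ (-k') = ((j' * N : ℤ) : ℝ) * 2 ^ (-k) := by push_cast; rw [hsc]; ring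
  have e2 : ((j':ℝ) + 1) * 2 ^ (-k') = (((j' + 1) * N : ℤ) : ℝ) * 2 ^ (-k) := by
    push_cast; rw [hsc]; ring
  rw [e1] at h2a ⊢; rw [e2] at h2b ⊢
  have hb1 : j' * N < j + 1 := int_lt_of_scale hs h2a (by push_cast at h1b ⊢; linarith)
  have hb2 : j < (j' + 1) * N := int_lt_of_scale hs h1a h2b
  constructor
  · calc ((j' * N : ℤ) : ℝ) * 2 ^ (-k) ≤ (j:ℝ) * 2 ^ (-k) := by
          apply mul_le_mul_of_nonneg_right _ hs.le
          exact_mod_cast (by omega : j' * N ≤ j)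
      _ ≤ y := hya
  · calc y < ((j:ℝ) + 1) * 2 ^ (-k) := hyb
      _ ≤ (((j' + 1) * N : ℤ) : ℝ) * 2 ^ (-k) := by
          apply mul_le_mul_of_nonneg_right _ hs.le
          push_cast
          exact_mod_cast (by push_cast; exact_mod_cast (by omega : j + 1 ≤ (j' + 1) * N) : ((j:ℝ) + 1) ≤ (((j'+1)*N : ℤ) : ℝ))

lemma dyadicCube_subset_of_inter {n : ℕ} {k k' : ℤ} (hk : k' ≤ k) {j j' : Fin n → ℤ}
    (h : (dyadicCube n k j ∩ dyadicCube n k' j').Nonempty) :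
    dyadicCube n k j ⊆ dyadicCube n k' j' := by
  obtain ⟨x, hx1, hx2⟩ := h
  intro y hy i
  exact oneD hk (hx1 i).1 (hx1 i).2 (hx2 i).1 (hx2 i).2 (hy i).1 (hy i).2

lemma dyadicCube_nonempty (n : ℕ) (k : ℤ) (j : Fin n → ℤ) : (dyadicCube n k j).Nonempty := by
  refine ⟨fun i => (j i : ℝ) * 2 ^ (-k), fun i => ⟨le_refl _, ?_⟩⟩
  have hs : (0:ℝ) < 2 ^ (-k) := by positivity
  show (j i : ℝ) * 2 ^ (-k) < ((j i : ℝ) + 1) * 2 ^ (-k)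
  nlinarith

lemma dyadicCube_eq_jdx {n : ℕ} {k : ℤ} {j j' : Fin n → ℤ}
    (h : (dyadicCube n k j ∩ dyadicCube n k j').Nonempty) : j = j' := by
  obtain ⟨x, hx1, hx2⟩ := h
  funext i
  have hs : (0:ℝ) < 2 ^ (-k) := by positivity
  have h1 := int_lt_of_scale hs (hx1 i).1
    (show x i < ((j' i + 1 : ℤ):ℝ) * 2 ^ (-k) by push_cast; exact (hx2 i).2)
  have h2 := int_lt_of_scale hs (hx2 i).1
    (show x i < ((j i + 1 : ℤ):ℝ) * 2 ^ (-k) by push_cast; exact (hx1 i).2)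
  omega

lemma measurableSet_dyadicCube (n : ℕ) (k : ℤ) (j : Fin n → ℤ) :
    MeasurableSet (dyadicCube n k j) := by
  have : dyadicCube n k j = ⋂ i, (fun x : Fin n → ℝ => x i) ⁻¹'
      (Set.Ico ((j i : ℝ) * 2 ^ (-k)) (((j i : ℝ) + 1) * 2 ^ (-k))) := by
    ext x; simp [dyadicCube, Set.mem_Ico]
  rw [this]
  exact MeasurableSet.iInter fun i => (measurable_pi_apply i) measurableSet_Ico



variable {X : Type*} [MeasurableSpace X] {μ : Measure X}

lemma integral_ind_one {s : Set X} (hs : MeasurableSet s) :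
    ∫ x, s.indicator (fun _ => (1:ℝ)) x ∂μ = (μ s).toReal := by
  rw [integral_indicator hs, setIntegral_const, smul_eq_mul, mul_one]; rfl

lemma integral_badPart (f : X → ℝ) (hf : Integrable f μ) {P Ph : Set X} (hP : P ⊆ Ph)
    (hPm : MeasurableSet P) (hPhm : MeasurableSet Ph) (hfin : μ Ph ≠ ⊤) :
    ∫ x, badPart μ f P Ph x ∂μ = 0 := by
  have hiP : Integrable (Set.indicator P f) μ := hf.indicator hPm
  have hiPh : Integrable (fun x =>
      avgOn μ (Set.indicator P f) Ph * Set.indicator Ph (fun _ => (1:ℝ)) x) μ :=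
    ((integrable_indicator_iff hPhm).mpr ((integrableOn_const_iff (by finiteness)).mpr (Or.inr hfin.lt_top))).const_mul _
  unfold badPart
  rw [integral_sub hiP hiPh, integral_indicator hPm, integral_const_mul,
    integral_ind_one hPhm]
  unfold avgOn
  by_cases h0 : μ Ph = 0
  · have hμP : μ P = 0 := le_antisymm (le_trans (measure_mono hP) h0.le) (zero_le)
    rw [if_pos h0, Measure.restrict_eq_zero.mpr hμP, integral_zero_measure]
    ring
  · rw [if_neg h0, setIntegral_indicator hPm, Set.inter_eq_right.mpr hP]
    have ht : (μ Ph).toReal ≠ 0 := ENNReal.toReal_ne_zero.mpr ⟨h0, hfin⟩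
    field_simp
    ring

lemma integrable_haarFn {I Ih : Set X} (hIm : MeasurableSet I) (hIhm : MeasurableSet Ih)
    (hI : I ⊆ Ih) (hfin : μ Ih ≠ ⊤) : Integrable (haarFn μ I Ih) μ := by
  by_cases h0 : μ I = 0
  · have h : haarFn μ I Ih = fun _ => 0 := funext fun x => if_pos h0
    rw [h]; exact integrable_zero _ _ _
  · have h : haarFn μ I Ih = fun x => Real.sqrt (μ I).toReal *
        ((μ I).toReal⁻¹ * Set.indicator I (fun _ => (1:ℝ)) x -
         (μ Ih).toReal⁻¹ * Set.indicator Ih (fun _ => (1:ℝ)) x) := funext fun x => if_neg h0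
    rw [h]
    apply Integrable.const_mul
    apply Integrable.sub <;> apply Integrable.const_mul
    · exact (integrable_indicator_iff hIm).mpr ((integrableOn_const_iff (by finiteness)).mpr
        (Or.inr ((measure_mono hI).trans_lt hfin.lt_top)))
    · exact (integrable_indicator_iff hIhm).mpr ((integrableOn_const_iff (by finiteness)).mpr (Or.inr hfin.lt_top))

lemma integral_haarFn {I Ih : Set X} (hIm : MeasurableSet I) (hIhm : MeasurableSet Ih)
    (hI : I ⊆ Ih) (hfin : μ Ih ≠ ⊤) : ∫ x, haarFn μ I Ih x ∂μ = 0 := by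
  by_cases h0 : μ I = 0
  · simp [haarFn, h0]
  · have h : haarFn μ I Ih = fun x => Real.sqrt (μ I).toReal *
        ((μ I).toReal⁻¹ * Set.indicator I (fun _ => (1:ℝ)) x -
         (μ Ih).toReal⁻¹ * Set.indicator Ih (fun _ => (1:ℝ)) x) := funext fun x => if_neg h0
    have hiI : Integrable (fun x => (μ I).toReal⁻¹ * Set.indicator I (fun _ => (1:ℝ)) x) μ :=
      ((integrable_indicator_iff hIm).mpr ((integrableOn_const_iff (by finiteness)).mpr
        (Or.inr ((measure_mono hI).trans_lt hfin.lt_top)))).const_mul _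
    have hiIh : Integrable (fun x => (μ Ih).toReal⁻¹ * Set.indicator Ih (fun _ => (1:ℝ)) x) μ :=
      ((integrable_indicator_iff hIhm).mpr ((integrableOn_const_iff (by finiteness)).mpr (Or.inr hfin.lt_top))).const_mul _
    simp only [h]
    rw [integral_const_mul, integral_sub hiI hiIh, integral_const_mul, integral_const_mul,
      integral_ind_one hIm, integral_ind_one hIhm]
    have h1 : (μ I).toReal ≠ 0 := ENNReal.toReal_ne_zero.mpr
      ⟨h0, ((measure_mono hI).trans_lt hfin.lt_top).ne⟩
    have h2 : (μ Ih).toReal ≠ 0 := ENNReal.toReal_ne_zero.mpr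
      ⟨fun h' => h0 (le_antisymm (h' ▸ measure_mono hI) (zero_le)), hfin⟩
    rw [inv_mul_cancel₀ h1, inv_mul_cancel₀ h2]
    ring


end

noncomputable section
open MeasureTheory Set

/-- Vanishing and size properties of the pairings `⟨b_P, h_I⟩`:
they vanish when `P̂ ∩ Î = ∅`, when `P̂ ⊊ Î`, and when `Î` is contained in a child
`P' ≠ P` of `P̂`; and when nonzero, `|⟨b_P, h_I⟩| ≲ μ(I)^{-1/2} ‖f𝟙_{P∩Î}‖_{L¹(μ)}`. -/
theorem stmt15 (n : ℕ) (μ : Measure (Fin n → ℝ))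
    (kP kI : ℤ) (jP jI jPh jIh : Fin n → ℤ)
    (hP : dyadicCube n kP jP ⊆ dyadicCube n (kP - 1) jPh)
    (hI : dyadicCube n kI jI ⊆ dyadicCube n (kI - 1) jIh)
    (hPhfin : μ (dyadicCube n (kP - 1) jPh) ≠ ⊤)
    (hIhfin : μ (dyadicCube n (kI - 1) jIh) ≠ ⊤)
    (f : (Fin n → ℝ) → ℝ) (hf : Integrable f μ) :
    ((dyadicCube n (kP - 1) jPh ∩ dyadicCube n (kI - 1) jIh = ∅ →
      (∫ x, badPart μ f (dyadicCube n kP jP) (dyadicCube n (kP - 1) jPh) x *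
        haarFn μ (dyadicCube n kI jI) (dyadicCube n (kI - 1) jIh) x ∂μ) = 0)) ∧
    ((dyadicCube n (kP - 1) jPh ⊆ dyadicCube n (kI - 1) jIh ∧
        dyadicCube n (kP - 1) jPh ≠ dyadicCube n (kI - 1) jIh →
      (∫ x, badPart μ f (dyadicCube n kP jP) (dyadicCube n (kP - 1) jPh) x *
        haarFn μ (dyadicCube n kI jI) (dyadicCube n (kI - 1) jIh) x ∂μ) = 0)) ∧
    ((∃ j' : Fin n → ℤ, j' ≠ jP ∧
        dyadicCube n (kI - 1) jIh ⊆ dyadicCube n kP j' ∧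
        dyadicCube n kP j' ⊆ dyadicCube n (kP - 1) jPh) →
      (∫ x, badPart μ f (dyadicCube n kP jP) (dyadicCube n (kP - 1) jPh) x *
        haarFn μ (dyadicCube n kI jI) (dyadicCube n (kI - 1) jIh) x ∂μ) = 0) ∧
    ((∫ x, badPart μ f (dyadicCube n kP jP) (dyadicCube n (kP - 1) jPh) x *
        haarFn μ (dyadicCube n kI jI) (dyadicCube n (kI - 1) jIh) x ∂μ) ≠ 0 →
      |∫ x, badPart μ f (dyadicCube n kP jP) (dyadicCube n (kP - 1) jPh) x *
        haarFn μ (dyadicCube n kI jI) (dyadicCube n (kI - 1) jIh) x ∂μ|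
        ≤ 2 * (Real.sqrt (μ (dyadicCube n kI jI)).toReal)⁻¹ *
          ∫ x in dyadicCube n kP jP ∩ dyadicCube n (kI - 1) jIh, |f x| ∂μ) := by
  set P := dyadicCube n kP jP with hPdef
  set Ph := dyadicCube n (kP - 1) jPh with hPhdef
  set I := dyadicCube n kI jI with hIdef
  set Ih := dyadicCube n (kI - 1) jIh with hIhdef
  have hPm : MeasurableSet P := measurableSet_dyadicCube _ _ _
  have hPhm : MeasurableSet Ph := measurableSet_dyadicCube _ _ _
  have hIm : MeasurableSet I := measurableSet_dyadicCube _ _ _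
  have hIhm : MeasurableSet Ih := measurableSet_dyadicCube _ _ _
  have hIfin : μ I ≠ ⊤ := ((measure_mono hI).trans_lt hIhfin.lt_top).ne
  have parta : Ph ∩ Ih = ∅ →
      (∫ x, badPart μ f P Ph x * haarFn μ I Ih x ∂μ) = 0 := by
    intro hdisj
    have hpt : ∀ x, badPart μ f P Ph x * haarFn μ I Ih x = 0 := by
      intro x
      by_cases hxPh : x ∈ Ph
      · have hxIh : x ∉ Ih := fun hx => (Set.eq_empty_iff_forall_notMem.mp hdisj x) ⟨hxPh, hx⟩
        have hxI : x ∉ I := fun hx => hxIh (hI hx)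
        have : haarFn μ I Ih x = 0 := by
          unfold haarFn
          by_cases h0 : μ I = 0 <;> simp [h0, Set.indicator_apply, hxI, hxIh]
        rw [this, mul_zero]
      · have hxP : x ∉ P := fun hx => hxPh (hP hx)
        have : badPart μ f P Ph x = 0 := by
          unfold badPart; simp [Set.indicator_apply, hxP, hxPh]
        rw [this, zero_mul]
    simp only [hpt, integral_zero]
  have partb : (Ph ⊆ Ih ∧ Ph ≠ Ih) →
      (∫ x, badPart μ f P Ph x * haarFn μ I Ih x ∂μ) = 0 := by
    rintro ⟨hsub, hne⟩
    have hcases : Ph ⊆ I ∨ Ph ∩ I = ∅ := by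
      rcases Set.eq_empty_or_nonempty (Ph ∩ I) with he | hne'
      · right; exact he
      · left
        by_cases hk : kI ≤ kP - 1
        · exact dyadicCube_subset_of_inter hk hne'
        · exfalso
          obtain ⟨z, hz⟩ := dyadicCube_nonempty n (kP - 1) jPh
          have h2 : Ih ⊆ Ph :=
            dyadicCube_subset_of_inter (by omega) ⟨z, hsub hz, hz⟩
          exact hne (Set.Subset.antisymm hsub h2)
    obtain ⟨x₀, hx₀⟩ := dyadicCube_nonempty n (kP - 1) jPh
    have hx₀' : x₀ ∈ Ph := hx₀
    have hconst : ∀ x ∈ Ph, haarFn μ I Ih x = haarFn μ I Ih x₀ := by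
      intro x hx
      rcases hcases with hsub' | hdisj
      · have h1 : x ∈ I := hsub' hx
        have h2 : x₀ ∈ I := hsub' hx₀'
        have h3 : x ∈ Ih := hI h1
        have h4 : x₀ ∈ Ih := hI h2
        unfold haarFn; simp [Set.indicator_apply, h1, h2, h3, h4]
      · have h1 : x ∉ I := fun h => (Set.eq_empty_iff_forall_notMem.mp hdisj x) ⟨hx, h⟩
        have h2 : x₀ ∉ I := fun h => (Set.eq_empty_iff_forall_notMem.mp hdisj x₀) ⟨hx₀', h⟩
        have h3 : x ∈ Ih := hsub hx
        have h4 : x₀ ∈ Ih := hsub hx₀'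
        unfold haarFn; simp [Set.indicator_apply, h1, h2, h3, h4]
    have hpt : ∀ x, badPart μ f P Ph x * haarFn μ I Ih x =
        haarFn μ I Ih x₀ * badPart μ f P Ph x := by
      intro x
      by_cases hx : x ∈ Ph
      · rw [hconst x hx]; ring
      · have hxP : x ∉ P := fun h => hx (hP h)
        have : badPart μ f P Ph x = 0 := by
          unfold badPart; simp [Set.indicator_apply, hxP, hx]
        rw [this, zero_mul, mul_zero]
    simp only [hpt]
    rw [integral_const_mul, integral_badPart f hf hP hPm hPhm hPhfin, mul_zero]
  have partc : (∃ j' : Fin n → ℤ, j' ≠ jP ∧ Ih ⊆ dyadicCube n kP j' ∧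
        dyadicCube n kP j' ⊆ Ph) →
      (∫ x, badPart μ f P Ph x * haarFn μ I Ih x ∂μ) = 0 := by
    rintro ⟨j', hnej, hIhsub, hsubPh⟩
    have hpt : ∀ x, badPart μ f P Ph x * haarFn μ I Ih x =
        (-(avgOn μ (Set.indicator P f) Ph)) * haarFn μ I Ih x := by
      intro x
      by_cases hxIh : x ∈ Ih
      · have hx' := hIhsub hxIh
        have hxP : x ∉ P := fun hxP => hnej (dyadicCube_eq_jdx ⟨x, hx', hxP⟩)
        have hxPh : x ∈ Ph := hsubPh hx'
        have : badPart μ f P Ph x = -(avgOn μ (Set.indicator P f) Ph) := by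
          unfold badPart; simp [Set.indicator_apply, hxP, hxPh]
        rw [this]
      · have hxI : x ∉ I := fun h => hxIh (hI h)
        have : haarFn μ I Ih x = 0 := by
          unfold haarFn
          by_cases h0 : μ I = 0 <;> simp [h0, Set.indicator_apply, hxI, hxIh]
        rw [this, mul_zero, mul_zero]
    simp only [hpt]
    rw [integral_const_mul, integral_haarFn hIm hIhm hI hIhfin, mul_zero]
  refine ⟨parta, partb, partc, ?_⟩
  intro hne0
  by_cases h0 : μ I = 0
  · exact absurd (by unfold haarFn; simp [h0]) hne0
  have hIhPh : Ih ⊆ Ph := by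
    rcases Set.eq_empty_or_nonempty (Ph ∩ Ih) with he | hd
    · exact absurd (parta he) hne0
    · by_cases hk : kI - 1 ≤ kP - 1
      · have hsub : Ph ⊆ Ih := dyadicCube_subset_of_inter hk hd
        by_cases heq : Ph = Ih
        · exact heq ▸ Set.Subset.rfl
        · exact absurd (partb ⟨hsub, heq⟩) hne0
      · exact dyadicCube_subset_of_inter (by omega) ⟨hd.choose, hd.choose_spec.2, hd.choose_spec.1⟩
  have hμIt : (μ I).toReal ≠ 0 := ENNReal.toReal_ne_zero.mpr ⟨h0, hIfin⟩
  have hμIh0 : μ Ih ≠ 0 := fun h => h0 (le_antisymm (h ▸ measure_mono hI) (zero_le))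
  have hμIht : (μ Ih).toReal ≠ 0 := ENNReal.toReal_ne_zero.mpr ⟨hμIh0, hIhfin⟩
  set s := Real.sqrt (μ I).toReal with hs
  have ha_pos : 0 < (μ I).toReal := lt_of_le_of_ne ENNReal.toReal_nonneg (Ne.symm hμIt)
  have hb_pos : 0 < (μ Ih).toReal := lt_of_le_of_ne ENNReal.toReal_nonneg (Ne.symm hμIht)
  have hs_pos : 0 < s := Real.sqrt_pos.mpr ha_pos
  have hhaar : haarFn μ I Ih = fun x => s *
      ((μ I).toReal⁻¹ * Set.indicator I (fun _ => (1:ℝ)) x -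
       (μ Ih).toReal⁻¹ * Set.indicator Ih (fun _ => (1:ℝ)) x) := funext fun x => if_neg h0
  have hpt : ∀ x, badPart μ f P Ph x * haarFn μ I Ih x =
      s * (μ I).toReal⁻¹ * Set.indicator (P ∩ I) f x
      - s * (μ Ih).toReal⁻¹ * Set.indicator (P ∩ Ih) f x
      - avgOn μ (Set.indicator P f) Ph * haarFn μ I Ih x := by
    intro x
    rw [hhaar]
    by_cases hxIh : x ∈ Ih
    · have hxPh : x ∈ Ph := hIhPh hxIh
      by_cases hxI : x ∈ I <;> by_cases hxP : x ∈ P <;>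
        (simp [badPart, Set.indicator_apply, Set.mem_inter_iff, hxI, hxP, hxIh, hxPh] <;> ring)
    · have hxI : x ∉ I := fun h => hxIh (hI h)
      simp [badPart, Set.indicator_apply, Set.mem_inter_iff, hxI, hxIh] <;> ring
  have hi1 : Integrable (fun x => s * (μ I).toReal⁻¹ * Set.indicator (P ∩ I) f x) μ :=
    (hf.indicator (hPm.inter hIm)).const_mul _
  have hi2 : Integrable (fun x => s * (μ Ih).toReal⁻¹ * Set.indicator (P ∩ Ih) f x) μ :=
    (hf.indicator (hPm.inter hIhm)).const_mul _
  have hi3 : Integrable (fun x => avgOn μ (Set.indicator P f) Ph * haarFn μ I Ih x) μ :=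
    (integrable_haarFn hIm hIhm hI hIhfin).const_mul _
  have hVeq : (∫ x, badPart μ f P Ph x * haarFn μ I Ih x ∂μ)
      = s * (μ I).toReal⁻¹ * (∫ x in P ∩ I, f x ∂μ)
        - s * (μ Ih).toReal⁻¹ * (∫ x in P ∩ Ih, f x ∂μ) := by
    have hi12 : Integrable (fun x => s * (μ I).toReal⁻¹ * Set.indicator (P ∩ I) f x
        - s * (μ Ih).toReal⁻¹ * Set.indicator (P ∩ Ih) f x) μ := hi1.sub hi2
    simp only [hpt]
    rw [integral_sub hi12 hi3, integral_sub hi1 hi2,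
      integral_const_mul, integral_const_mul, integral_const_mul,
      integral_indicator (hPm.inter hIm), integral_indicator (hPm.inter hIhm),
      integral_haarFn hIm hIhm hI hIhfin, mul_zero, sub_zero]
  rw [hVeq]
  set X1 := ∫ x in P ∩ I, f x ∂μ
  set Y1 := ∫ x in P ∩ Ih, f x ∂μ
  set M1 := ∫ x in P ∩ I, |f x| ∂μ
  set M := ∫ x in P ∩ Ih, |f x| ∂μ
  have habsX : |X1| ≤ M1 := by
    have := norm_integral_le_integral_norm (μ := μ.restrict (P ∩ I)) f
    simpa [Real.norm_eq_abs] using this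
  have habsY : |Y1| ≤ M := by
    have := norm_integral_le_integral_norm (μ := μ.restrict (P ∩ Ih)) f
    simpa [Real.norm_eq_abs] using this
  have hmono : M1 ≤ M := by
    apply setIntegral_mono_set (hf.abs.integrableOn)
      (Filter.Eventually.of_forall fun x => abs_nonneg _)
    exact HasSubset.Subset.eventuallyLE (Set.inter_subset_inter_right P hI)
  have hM0 : 0 ≤ M := le_trans (abs_nonneg _) habsY
  have hkey : s * (μ I).toReal⁻¹ = s⁻¹ := by
    have hss : s * s = (μ I).toReal := Real.mul_self_sqrt ha_pos.le
    rw [← hss]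
    field_simp
  have hble : (μ Ih).toReal⁻¹ ≤ (μ I).toReal⁻¹ := by
    apply inv_anti₀ ha_pos
    exact (ENNReal.toReal_le_toReal hIfin hIhfin).mpr (measure_mono hI)
  calc |s * (μ I).toReal⁻¹ * X1 - s * (μ Ih).toReal⁻¹ * Y1|
      ≤ |s * (μ I).toReal⁻¹ * X1| + |s * (μ Ih).toReal⁻¹ * Y1| := abs_sub _ _
    _ = s * (μ I).toReal⁻¹ * |X1| + s * (μ Ih).toReal⁻¹ * |Y1| := by
        rw [abs_mul (s * (μ I).toReal⁻¹) X1, abs_mul (s * (μ Ih).toReal⁻¹) Y1,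
          abs_of_nonneg (by positivity : (0:ℝ) ≤ s * (μ I).toReal⁻¹),
          abs_of_nonneg (by positivity : (0:ℝ) ≤ s * (μ Ih).toReal⁻¹)]
    _ ≤ s * (μ I).toReal⁻¹ * M + s * (μ I).toReal⁻¹ * M := by
        apply add_le_add
        · exact mul_le_mul_of_nonneg_left (le_trans habsX hmono) (by positivity)
        · apply mul_le_mul (mul_le_mul_of_nonneg_left hble hs_pos.le) habsY (abs_nonneg _)
          positivity
    _ = 2 * s⁻¹ * M := by rw [hkey]; ring
end
end

section
/- Let μ be a positive Radon measure and 𝒮 a sparse family of cubes with constant τ < 1. Suppose B: L²×L² → ℝ₊ is a bi-sublinear form admitting a localization B = Σ_{R ∈ 𝒮_max} B_R and for each R ∈ 𝒮 there is an exceptional set E_R ⊆ R with μ(E_R) ≤ μ(R)/2 such that B_R(f,g) ≤ C a_R ⟨|f|⟩_R ⟨|g|⟩_R μ(R) + Σ_{R' ∈ 𝒮, R' maximal in E_R} B_{R'}(f,g). If additionally B_R(f,g) is finite and the recursion terminates (e.g., only finitely many scales), then B(f,g) ≲ Σ_{R ∈ 𝒮} a_R ⟨|f|⟩_R ⟨|g|⟩_R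 μ(R). -/
open MeasureTheory Set
open scoped ENNReal

noncomputable section

private lemma tsum_le_of_subsingleton_support {ι : Type*} (h : ι → ℝ≥0∞) (c : ℝ≥0∞)
    (hle : ∀ i, h i ≤ c) (huniq : ∀ i j, h i ≠ 0 → h j ≠ 0 → i = j) :
    ∑' i, h i ≤ c := by
  by_cases hex : ∃ i, h i ≠ 0
  · obtain ⟨i₀, hi₀⟩ := hex
    rw [tsum_eq_single i₀ (fun j hj => by
      by_contra hfj; exact hj (huniq j i₀ hfj hi₀))]
    exact hle i₀
  · push_neg at hex
    simp [hex]

/-- A bi-sublinear form `B` localized over the maximal cubes of a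
sparse family `𝒮`, satisfying the recursive estimate
`B_R ≤ C a_R ⟨f⟩_R ⟨g⟩_R μ(R) + Σ_{R' maximal in E_R} B_{R'}` with exceptional sets
`μ(E_R) ≤ μ(R)/2` and a terminating recursion, is dominated by the sparse form
`C Σ_{R ∈ 𝒮} a_R ⟨f⟩_R ⟨g⟩_R μ(R)`. -/
theorem stmt16 {X : Type*} [MeasurableSpace X] (μ : Measure X)
    (𝒮 : Set (Set X)) (h𝒮count : 𝒮.Countable)
    (τ : ℝ≥0∞) (hτ : τ < 1)
    (hsparse : ∀ S ∈ 𝒮,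
      ∑' T : {T : Set X // T ∈ 𝒮 ∧ T ⊆ S ∧ T ≠ S}, μ T.1 ≤ τ * μ S)
    (f g : X → ℝ≥0∞) (B : Set X → ℝ≥0∞) (a : Set X → ℝ≥0∞) (C : ℝ≥0∞)
    (E : Set X → Set X) (M : Set X → Set (Set X)) (d : Set X → ℕ)
    (hE : ∀ R ∈ 𝒮, E R ⊆ R ∧ μ (E R) ≤ μ R / 2)
    (hMsub : ∀ R ∈ 𝒮, M R ⊆ 𝒮)
    (hME : ∀ R ∈ 𝒮, ∀ R' ∈ M R, R' ⊆ E R)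
    (hMdisj : ∀ R ∈ 𝒮, (M R).PairwiseDisjoint id)
    (hd : ∀ R ∈ 𝒮, ∀ R' ∈ M R, d R' < d R)
    (hBfin : ∀ R ∈ 𝒮, B R ≠ ⊤)
    (hrec : ∀ R ∈ 𝒮, B R ≤ C * a R * ((∫⁻ x in R, f x ∂μ) / μ R) *
        ((∫⁻ x in R, g x ∂μ) / μ R) * μ R + ∑' R' : M R, B R'.1)
    (Btot : ℝ≥0∞) (𝒮max : Set (Set X)) (hmaxsub : 𝒮max ⊆ 𝒮)
    (hmaxdisj : 𝒮max.PairwiseDisjoint id)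
    (hBtot : Btot = ∑' R : 𝒮max, B R.1) :
    Btot ≤ C * ∑' R : 𝒮, a R.1 * ((∫⁻ x in R.1, f x ∂μ) / μ R.1) *
        ((∫⁻ x in R.1, g x ∂μ) / μ R.1) * μ R.1 := by
  classical
  -- the sparse term
  set t : Set X → ℝ≥0∞ := fun T => a T * ((∫⁻ x in T, f x ∂μ) / μ T) *
      ((∫⁻ x in T, g x ∂μ) / μ T) * μ T with ht_def
  -- the family of subcubes of a cube
  set SR : Set X → Set (Set X) := fun R => {T : Set X | T ∈ 𝒮 ∧ T ⊆ R} with hSR_def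
  set F : Set X → ℝ≥0∞ := fun R => ∑' T : SR R, t T.1 with hF_def
  -- degenerate cubes contribute zero
  have ht0 : ∀ T : Set X, μ T = 0 ∨ μ T = ⊤ → t T = 0 := by
    intro T h
    rcases h with h | h
    · simp [ht_def, h]
    · simp [ht_def, h, ENNReal.div_top]
  have hne : ∀ T : Set X, t T ≠ 0 → μ T ≠ 0 ∧ μ T ≠ ⊤ ∧ T.Nonempty := by
    intro T h
    have h0 : μ T ≠ 0 := fun hh => h (ht0 T (Or.inl hh))
    have h1 : μ T ≠ ⊤ := fun hh => h (ht0 T (Or.inr hh))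
    refine ⟨h0, h1, ?_⟩
    rw [Set.nonempty_iff_ne_empty]
    intro hT; apply h0; rw [hT]; exact measure_empty
  -- key pointwise estimate
  have key : ∀ R ∈ 𝒮, ∀ T : Set X,
      ({R} : Set (Set X)).indicator t T + ∑' (R' : M R), (SR R'.1).indicator t T
        ≤ (SR R).indicator t T := by
    intro R hR T
    by_cases h0 : t T = 0
    · have hz : ∀ s : Set (Set X), s.indicator t T = 0 := by
        intro s; by_cases hTs : T ∈ s <;> simp [hTs, h0]
      simp [hz]
    · obtain ⟨hμ0, hμt, hTne⟩ := hne T h0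
      by_cases hTR : T = R
      · subst hTR
        have hmem : T ∈ SR T := ⟨hR, subset_rfl⟩
        have hz : ∀ R' : M T, (SR R'.1).indicator t T = 0 := by
          intro R'
          apply Set.indicator_of_notMem
          intro hmem'
          have h1 : T ⊆ E T := hmem'.2.trans (hME T hR R'.1 R'.2)
          have h2 : μ T ≤ μ T / 2 := le_trans (measure_mono h1) (hE T hR).2
          exact absurd h2 (not_le.mpr (ENNReal.half_lt_self hμ0 hμt))
        simp only [tsum_congr hz, tsum_zero, add_zero,
          Set.indicator_of_mem (Set.mem_singleton T), Set.indicator_of_mem hmem]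
        exact le_rfl
      · rw [Set.indicator_of_notMem (by simpa using hTR), zero_add]
        by_cases hTSR : T ∈ SR R
        · rw [Set.indicator_of_mem hTSR]
          apply tsum_le_of_subsingleton_support
          · intro i; exact Set.indicator_le_self _ _ _
          · intro i j hi hj
            have hTi : T ∈ SR i.1 := by
              by_contra hc; exact hi (Set.indicator_of_notMem hc _)
            have hTj : T ∈ SR j.1 := by
              by_contra hc; exact hj (Set.indicator_of_notMem hc _)
            by_contra hij
            have hij' : i.1 ≠ j.1 := fun h => hij (Subtype.ext h)
            have hdisj : Disjoint i.1 j.1 := hMdisj R hR i.2 j.2 hij'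
            have : T ⊆ (∅ : Set X) := hdisj hTi.2 hTj.2
            exact hTne.ne_empty (Set.subset_empty_iff.mp this)
        · have hz : ∀ R' : M R, (SR R'.1).indicator t T = 0 := by
            intro R'
            apply Set.indicator_of_notMem
            intro hmem'
            exact hTSR ⟨hmem'.1, hmem'.2.trans ((hME R hR R'.1 R'.2).trans (hE R hR).1)⟩
          simp [tsum_congr hz]
  -- key summed estimate
  have keyF : ∀ R ∈ 𝒮, t R + ∑' (R' : M R), F R'.1 ≤ F R := by
    intro R hR
    have e1 : t R = ∑' T : Set X, ({R} : Set (Set X)).indicator t T := by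
      rw [← tsum_subtype, tsum_singleton]
    have e2 : ∀ R' : M R, F R'.1 = ∑' T : Set X, (SR R'.1).indicator t T := by
      intro R'; rw [hF_def]; exact tsum_subtype _ _
    calc t R + ∑' (R' : M R), F R'.1
        = (∑' T : Set X, ({R} : Set (Set X)).indicator t T)
          + ∑' (R' : M R), ∑' T : Set X, (SR R'.1).indicator t T := by
          rw [← e1, tsum_congr e2]
      _ = (∑' T : Set X, ({R} : Set (Set X)).indicator t T)
          + ∑' T : Set X, ∑' (R' : M R), (SR R'.1).indicator t T := by
          rw [ENNReal.tsum_comm]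
      _ = ∑' T : Set X, (({R} : Set (Set X)).indicator t T
          + ∑' (R' : M R), (SR R'.1).indicator t T) := (ENNReal.tsum_add).symm
      _ ≤ ∑' T : Set X, (SR R).indicator t T := ENNReal.tsum_le_tsum (key R hR)
      _ = F R := (tsum_subtype _ _).symm
  -- main induction
  have main : ∀ n : ℕ, ∀ R ∈ 𝒮, d R = n → B R ≤ C * F R := by
    intro n
    induction n using Nat.strong_induction_on with
    | _ n IH =>
      intro R hR hdR
      calc B R ≤ C * a R * ((∫⁻ x in R, f x ∂μ) / μ R) *
            ((∫⁻ x in R, g x ∂μ) / μ R) * μ R + ∑' R' : M R, B R'.1 := hrec R hR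
        _ = C * t R + ∑' R' : M R, B R'.1 := by rw [ht_def]; ring_nf
        _ ≤ C * t R + ∑' R' : M R, C * F R'.1 := by
            gcongr with R'
            exact IH (d R'.1) (hdR ▸ hd R hR R'.1 R'.2) R'.1 (hMsub R hR R'.2) rfl
        _ = C * (t R + ∑' R' : M R, F R'.1) := by
            rw [ENNReal.tsum_mul_left, mul_add]
        _ ≤ C * F R := mul_le_mul_right (keyF R hR) C
  -- conclude
  rw [hBtot]
  have step1 : ∑' R : 𝒮max, B R.1 ≤ C * ∑' R : 𝒮max, F R.1 := by
    rw [← ENNReal.tsum_mul_left]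
    exact ENNReal.tsum_le_tsum fun R => main (d R.1) R.1 (hmaxsub R.2) rfl
  refine step1.trans (mul_le_mul_right ?_ C)
  have keymax : ∀ T : Set X,
      (∑' (R : 𝒮max), (SR R.1).indicator t T) ≤ 𝒮.indicator t T := by
    intro T
    by_cases h0 : t T = 0
    · have hz : ∀ R : 𝒮max, (SR R.1).indicator t T = 0 := by
        intro R; by_cases hTs : T ∈ SR R.1 <;> simp [hTs, h0]
      simp [tsum_congr hz]
    · obtain ⟨hμ0, hμt, hTne⟩ := hne T h0
      apply tsum_le_of_subsingleton_support
      · intro R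
        by_cases hTs : T ∈ SR R.1
        · rw [Set.indicator_of_mem hTs, Set.indicator_of_mem hTs.1]
        · rw [Set.indicator_of_notMem hTs]; exact zero_le'
      · intro i j hi hj
        have hTi : T ∈ SR i.1 := by
          by_contra hc; exact hi (Set.indicator_of_notMem hc _)
        have hTj : T ∈ SR j.1 := by
          by_contra hc; exact hj (Set.indicator_of_notMem hc _)
        by_contra hij
        have hij' : i.1 ≠ j.1 := fun h => hij (Subtype.ext h)
        have hdisj : Disjoint i.1 j.1 := hmaxdisj i.2 j.2 hij'
        have : T ⊆ (∅ : Set X) := hdisj hTi.2 hTj.2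
        exact hTne.ne_empty (Set.subset_empty_iff.mp this)
  calc ∑' R : 𝒮max, F R.1
      = ∑' R : 𝒮max, ∑' T : Set X, (SR R.1).indicator t T := by
        refine tsum_congr fun R => ?_
        rw [hF_def]; exact tsum_subtype _ _
    _ = ∑' T : Set X, ∑' R : 𝒮max, (SR R.1).indicator t T := ENNReal.tsum_comm
    _ ≤ ∑' T : Set X, 𝒮.indicator t T := ENNReal.tsum_le_tsum keymax
    _ = ∑' R : 𝒮, t R.1 := (tsum_subtype _ _).symm
end
end

section
/- Let μ be a positive Radon measure and let 𝒞 be a finite convex family of dyadic cubes (if J ⊆ K ⊆ I with I, J ∈ 𝒞 and K dyadic, then K ∈ 𝒞) that is closed under siblings (if I ∈ 𝒞 then all children of Î are in 𝒞), with a unique maximal cube Q and with minimal cubes forming a partition family ℳ. Then for any locally integrable g, Σ_{J ∈ 𝒞∖{Q}} ⟨g, h_J⟩ h_J = Σ_{M ∈ ℳ} ⟨g⟩_M 𝟙_M − ⟨g⟩_Q 𝟙_Q, μ-almost everywhere, where the sum is over all non-maximal cubes of the family. -/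
open MeasureTheory Set
open scoped ENNReal

noncomputable section

/-- The dyadic parent of the cube with parameters `p = (k, j)`. -/
def parentCube (n : ℕ) (p : ℤ × (Fin n → ℤ)) : Set (Fin n → ℝ) :=
  dyadicCube n (p.1 - 1) (fun i => Int.fdiv (p.2 i) 2)

namespace Stmt18Aux

lemma mem_dyadic_iff {n : ℕ} {k : ℤ} {j : Fin n → ℤ} {x : Fin n → ℝ} :
    x ∈ dyadicCube n k j ↔ ∀ i, ⌊x i * (2:ℝ)^k⌋ = j i := by
  have h2 : (0:ℝ) < (2:ℝ)^k := zpow_pos two_pos k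
  refine forall_congr' fun i => ?_
  rw [Int.floor_eq_iff, zpow_neg, ← div_eq_mul_inv, ← div_eq_mul_inv,
    div_le_iff₀ h2, lt_div_iff₀ h2]

lemma dyadic_nonempty {n : ℕ} (k : ℤ) (j : Fin n → ℤ) : (dyadicCube n k j).Nonempty := by
  refine ⟨fun i => (j i : ℝ) * (2:ℝ)^(-k), fun i => ⟨le_refl _, ?_⟩⟩
  have h2 : (0:ℝ) < (2:ℝ)^(-k) := zpow_pos two_pos _
  simp only
  nlinarith

lemma measurable_dyadic {n : ℕ} (k : ℤ) (j : Fin n → ℤ) :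
    MeasurableSet (dyadicCube n k j) := by
  have : dyadicCube n k j = ⋂ i, (fun x : Fin n → ℝ => x i) ⁻¹'
      (Set.Ico ((j i : ℝ) * (2:ℝ)^(-k)) (((j i : ℝ)+1) * (2:ℝ)^(-k))) := by
    ext x; simp [dyadicCube, Set.mem_Ico]
  rw [this]
  exact MeasurableSet.iInter fun i => measurableSet_Ico.preimage (measurable_pi_apply i)

lemma fdiv_eq_of {m q N : ℤ} (hN : 0 < N) (h1 : q * N ≤ m) (h2 : m < (q+1) * N) :
    Int.fdiv m N = q := by
  have hf := Int.mul_fdiv_add_fmod m N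
  have h0 : 0 ≤ Int.fmod m N := Int.fmod_nonneg_of_pos m hN
  have hlt := Int.fmod_lt_of_pos m hN
  set f := Int.fdiv m N with hfdef
  set r := Int.fmod m N with hrdef
  rcases lt_trichotomy f q with h | h | h
  · nlinarith
  · exact h
  · nlinarith

lemma floor_scale (t : ℝ) (N : ℕ) (hN : 0 < N) : Int.fdiv ⌊t * (N:ℝ)⌋ N = ⌊t⌋ := by
  have hN' : (0:ℝ) < (N:ℝ) := by exact_mod_cast hN
  apply fdiv_eq_of (by exact_mod_cast hN)
  · rw [Int.le_floor]; push_cast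
    exact mul_le_mul_of_nonneg_right (Int.floor_le t) hN'.le
  · rw [Int.floor_lt]; push_cast
    exact mul_lt_mul_of_pos_right (Int.lt_floor_add_one t) hN'

lemma floor_coarse {u v : ℝ} {k k' : ℤ} (hkk : k' ≤ k)
    (h : ⌊u * (2:ℝ)^k⌋ = ⌊v * (2:ℝ)^k⌋) : ⌊u * (2:ℝ)^k'⌋ = ⌊v * (2:ℝ)^k'⌋ := by
  set d : ℕ := (k - k').toNat with hd
  have hk : (2:ℝ)^k = (2:ℝ)^k' * (2:ℝ)^(d:ℤ) := by
    rw [← zpow_add₀ (by norm_num : (2:ℝ) ≠ 0)]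
    congr 1; omega
  have hdpos : (0:ℕ) < 2^d := Nat.pow_pos (by norm_num)
  have e : ∀ w : ℝ, ⌊w * (2:ℝ)^k'⌋ = Int.fdiv ⌊(w * (2:ℝ)^k') * ((2^d : ℕ):ℝ)⌋ (2^d : ℕ) := by
    intro w; rw [floor_scale _ _ hdpos]
  rw [e u, e v]
  congr 1
  rw [mul_assoc, mul_assoc] at *
  have : ((2^d : ℕ):ℝ) = (2:ℝ)^(d:ℤ) := by push_cast; norm_cast
  rw [this, ← hk] at *
  exact h

lemma nest {n : ℕ} {k k' : ℤ} {j m : Fin n → ℤ} (hkk : k' ≤ k)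
    (h : (dyadicCube n k j ∩ dyadicCube n k' m).Nonempty) :
    dyadicCube n k j ⊆ dyadicCube n k' m := by
  obtain ⟨x, hx1, hx2⟩ := h
  rw [mem_dyadic_iff] at hx1 hx2
  intro y hy
  rw [mem_dyadic_iff] at hy ⊢
  intro i
  rw [← hx2 i]
  exact floor_coarse hkk ((hy i).trans (hx1 i).symm)

lemma same_scale_eq {n : ℕ} {k : ℤ} {j m : Fin n → ℤ} {x : Fin n → ℝ}
    (h1 : x ∈ dyadicCube n k j) (h2 : x ∈ dyadicCube n k m) : j = m := by
  rw [mem_dyadic_iff] at h1 h2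
  funext i; rw [← h1 i, h2 i]

lemma scale_le {n : ℕ} (hn : 0 < n) {k k' : ℤ} {j m : Fin n → ℤ}
    (h : dyadicCube n k j ⊆ dyadicCube n k' m) : k' ≤ k := by
  by_contra hc
  push_neg at hc
  set a : Fin n → ℝ := fun i => (j i : ℝ) * (2:ℝ)^(-k) with ha
  have haj : a ∈ dyadicCube n k j := by
    intro i; constructor
    · exact le_refl _
    · have h2 : (0:ℝ) < (2:ℝ)^(-k) := zpow_pos two_pos _
      simp only [ha]; nlinarith
  set w : Fin n → ℝ := fun i => a i + (2:ℝ)^(-k') with hw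
  have hwj : w ∈ dyadicCube n k j := by
    intro i
    have h2 : (0:ℝ) < (2:ℝ)^(-k') := zpow_pos two_pos _
    have h3 : (2:ℝ)^(-k') < (2:ℝ)^(-k) := by
      apply zpow_lt_zpow_right₀ one_lt_two; omega
    constructor
    · simp only [hw, ha]; nlinarith
    · simp only [hw, ha]; nlinarith
  have hma := (mem_dyadic_iff.mp (h haj))
  have hmw := (mem_dyadic_iff.mp (h hwj))
  obtain ⟨i0⟩ : Nonempty (Fin n) := ⟨⟨0, hn⟩⟩
  have : w i0 * (2:ℝ)^k' = a i0 * (2:ℝ)^k' + 1 := by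
    simp only [hw]
    rw [add_mul, zpow_neg]
    field_simp
  have hfl : ⌊w i0 * (2:ℝ)^k'⌋ = ⌊a i0 * (2:ℝ)^k'⌋ + 1 := by
    rw [this, Int.floor_add_one]
  rw [hma i0, hmw i0] at hfl
  omega

lemma cube_inj {n : ℕ} (hn : 0 < n) {k k' : ℤ} {j m : Fin n → ℤ}
    (h : dyadicCube n k j = dyadicCube n k' m) : k = k' ∧ j = m := by
  have h1 : k' ≤ k := scale_le hn h.le
  have h2 : k ≤ k' := scale_le hn h.ge
  have hk : k = k' := le_antisymm h2 h1
  subst hk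
  obtain ⟨x, hx⟩ := dyadic_nonempty k j
  exact ⟨rfl, same_scale_eq hx (h ▸ hx)⟩

lemma subset_parent {n : ℕ} (p : ℤ × (Fin n → ℤ)) :
    dyadicCube n p.1 p.2 ⊆ parentCube n p := by
  intro x hx
  rw [mem_dyadic_iff] at hx
  rw [parentCube, mem_dyadic_iff]
  intro i
  have h2 : (2:ℝ)^p.1 = (2:ℝ)^(p.1-1) * ((2:ℕ):ℝ) := by
    push_cast
    rw [← zpow_add_one₀ (by norm_num : (2:ℝ) ≠ 0), sub_add_cancel]
  have := floor_scale (x i * (2:ℝ)^(p.1-1)) 2 (by norm_num)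
  rw [mul_assoc, ← h2, hx i] at this
  exact this.symm

lemma child_floor {n : ℕ} {R : ℤ × (Fin n → ℤ)} {x : Fin n → ℝ}
    (hx : x ∈ dyadicCube n R.1 R.2) (i : Fin n) :
    Int.fdiv ⌊x i * (2:ℝ)^(R.1+1)⌋ 2 = R.2 i := by
  rw [mem_dyadic_iff] at hx
  have h2 : (2:ℝ)^(R.1+1) = (2:ℝ)^R.1 * ((2:ℕ):ℝ) := by
    push_cast
    rw [← zpow_add_one₀ (by norm_num : (2:ℝ) ≠ 0)]
  have := floor_scale (x i * (2:ℝ)^R.1) 2 (by norm_num)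
  rw [mul_assoc, ← h2, hx i] at this
  exact this

/-- strict containment forces strictly finer scale -/
lemma strict_scale {n : ℕ} (hn : 0 < n) {p q : ℤ × (Fin n → ℤ)}
    (h : dyadicCube n p.1 p.2 ⊆ dyadicCube n q.1 q.2) (hne : p ≠ q) : q.1 < p.1 := by
  have hle := scale_le hn h
  rcases eq_or_lt_of_le hle with heq | hlt
  · exfalso
    obtain ⟨x, hx⟩ := dyadic_nonempty p.1 p.2
    have hx2 := h hx
    rw [heq] at hx2
    exact hne (Prod.ext_iff.mpr ⟨heq.symm, same_scale_eq hx hx2⟩)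
  · exact hlt

lemma eq_of_ss {n : ℕ} (hn : 0 < n) {p q : ℤ × (Fin n → ℤ)}
    (h1 : dyadicCube n p.1 p.2 ⊆ dyadicCube n q.1 q.2)
    (h2 : dyadicCube n q.1 q.2 ⊆ dyadicCube n p.1 p.2) : p = q := by
  obtain ⟨hk, hj⟩ := cube_inj hn (Set.Subset.antisymm h1 h2)
  exact Prod.ext_iff.mpr ⟨hk, hj⟩

/-- the parent parameters -/
def pp {n : ℕ} (p : ℤ × (Fin n → ℤ)) : ℤ × (Fin n → ℤ) :=
  (p.1 - 1, fun i => Int.fdiv (p.2 i) 2)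

lemma parentCube_eq_pp {n : ℕ} (p : ℤ × (Fin n → ℤ)) :
    parentCube n p = dyadicCube n (pp p).1 (pp p).2 := rfl

lemma subset_pp {n : ℕ} (p : ℤ × (Fin n → ℤ)) :
    dyadicCube n p.1 p.2 ⊆ dyadicCube n (pp p).1 (pp p).2 := subset_parent p

/-- iterated parents -/
def anc {n : ℕ} : ℕ → (ℤ × (Fin n → ℤ)) → (ℤ × (Fin n → ℤ))
  | 0, p => p
  | (m+1), p => pp (anc m p)

lemma anc_fst {n : ℕ} (m : ℕ) (p : ℤ × (Fin n → ℤ)) : (anc m p).1 = p.1 - m := by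
  induction m with
  | zero => simp [anc]
  | succ m ih => simp only [anc, pp, ih]; push_cast; ring

lemma anc_subset {n : ℕ} (m : ℕ) (p : ℤ × (Fin n → ℤ)) :
    dyadicCube n p.1 p.2 ⊆ dyadicCube n (anc m p).1 (anc m p).2 := by
  induction m with
  | zero => exact subset_rfl
  | succ m ih => exact ih.trans (subset_pp (anc m p))

lemma indicator_mul_eq {n : ℕ} {A : Set (Fin n → ℝ)} (g : (Fin n → ℝ) → ℝ) (y : Fin n → ℝ) :
    g y * Set.indicator A (fun _ => (1:ℝ)) y = Set.indicator A g y := by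
  by_cases h : y ∈ A <;> simp [Set.indicator, h]

lemma sum_setIntegral {n : ℕ} (μ : Measure (Fin n → ℝ)) (R : ℤ × (Fin n → ℤ))
    (s : Finset (ℤ × (Fin n → ℤ)))
    (hch : ∀ p ∈ s, dyadicCube n p.1 p.2 ⊆ dyadicCube n R.1 R.2)
    (hpart : ∀ y, Set.indicator (dyadicCube n R.1 R.2) (fun _ => (1:ℝ)) y
       = ∑ p ∈ s, Set.indicator (dyadicCube n p.1 p.2) (fun _ => (1:ℝ)) y)
    (g : (Fin n → ℝ) → ℝ) (hg : IntegrableOn g (dyadicCube n R.1 R.2) μ) :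
    ∑ p ∈ s, ∫ y in dyadicCube n p.1 p.2, g y ∂μ = ∫ y in dyadicCube n R.1 R.2, g y ∂μ := by
  have hint : ∀ p ∈ s, Integrable (Set.indicator (dyadicCube n p.1 p.2) g) μ :=
    fun p hp => (integrable_indicator_iff (measurable_dyadic _ _)).2 (hg.mono_set (hch p hp))
  have hfun : Set.indicator (dyadicCube n R.1 R.2) g
      = fun y => ∑ p ∈ s, Set.indicator (dyadicCube n p.1 p.2) g y := by
    funext y
    rw [← indicator_mul_eq g y, hpart y, Finset.mul_sum]
    exact Finset.sum_congr rfl fun p _ => indicator_mul_eq g y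
  calc ∑ p ∈ s, ∫ y in dyadicCube n p.1 p.2, g y ∂μ
      = ∑ p ∈ s, ∫ y, Set.indicator (dyadicCube n p.1 p.2) g y ∂μ := by
        exact Finset.sum_congr rfl fun p _ => (integral_indicator (measurable_dyadic _ _)).symm
    _ = ∫ y, ∑ p ∈ s, Set.indicator (dyadicCube n p.1 p.2) g y ∂μ :=
        (integral_finset_sum s hint).symm
    _ = ∫ y, Set.indicator (dyadicCube n R.1 R.2) g y ∂μ := by rw [hfun]
    _ = ∫ y in dyadicCube n R.1 R.2, g y ∂μ := integral_indicator (measurable_dyadic _ _)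

/-- the one-scale identity -/
lemma one_scale {n : ℕ} (μ : Measure (Fin n → ℝ)) (R : ℤ × (Fin n → ℤ))
    (s : Finset (ℤ × (Fin n → ℤ)))
    (hch : ∀ p ∈ s, dyadicCube n p.1 p.2 ⊆ dyadicCube n R.1 R.2 ∧
      parentCube n p = dyadicCube n R.1 R.2)
    (hpart : ∀ y, Set.indicator (dyadicCube n R.1 R.2) (fun _ => (1:ℝ)) y
       = ∑ p ∈ s, Set.indicator (dyadicCube n p.1 p.2) (fun _ => (1:ℝ)) y)
    (hfinR : μ (dyadicCube n R.1 R.2) ≠ ⊤)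
    (g : (Fin n → ℝ) → ℝ) (hg : IntegrableOn g (dyadicCube n R.1 R.2) μ)
    (x : Fin n → ℝ)
    (hx : ∀ p ∈ s, μ (dyadicCube n p.1 p.2) = 0 → x ∉ dyadicCube n p.1 p.2) :
    ∑ p ∈ s, (∫ y, g y * haarFn μ (dyadicCube n p.1 p.2) (parentCube n p) y ∂μ) *
        haarFn μ (dyadicCube n p.1 p.2) (parentCube n p) x
    = (∑ p ∈ s, avgOn μ g (dyadicCube n p.1 p.2) *
          Set.indicator (dyadicCube n p.1 p.2) (fun _ => (1:ℝ)) x)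
      - avgOn μ g (dyadicCube n R.1 R.2) *
          Set.indicator (dyadicCube n R.1 R.2) (fun _ => (1:ℝ)) x := by
  set K := dyadicCube n R.1 R.2 with hK
  set T := (μ K).toReal with hT
  set aR := avgOn μ g K with haR
  have hKmeas : MeasurableSet K := measurable_dyadic _ _
  have key : ∀ p ∈ s,
      (∫ y, g y * haarFn μ (dyadicCube n p.1 p.2) (parentCube n p) y ∂μ) *
        haarFn μ (dyadicCube n p.1 p.2) (parentCube n p) x
      = (avgOn μ g (dyadicCube n p.1 p.2) *
            Set.indicator (dyadicCube n p.1 p.2) (fun _ => (1:ℝ)) x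
          - aR * Set.indicator (dyadicCube n p.1 p.2) (fun _ => (1:ℝ)) x)
        - ((μ (dyadicCube n p.1 p.2)).toReal *
            (avgOn μ g (dyadicCube n p.1 p.2) - aR)) *
          (T⁻¹ * Set.indicator K (fun _ => (1:ℝ)) x) := by
    intro p hp
    set J := dyadicCube n p.1 p.2 with hJ
    rw [(hch p hp).2]
    by_cases hz : μ J = 0
    · have h1 : haarFn μ J K = fun _ => (0:ℝ) := by funext y; simp [haarFn, hz]
      have h2 : x ∉ J := hx p hp (by rw [← hJ]; exact hz)
      have h3 : avgOn μ g J = 0 := by rw [avgOn, if_pos hz]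
      simp [h1, h3, Set.indicator_of_notMem h2, hz]
    · have hzK : μ K ≠ 0 := fun h => hz (le_antisymm (h ▸ measure_mono (hch p hp).1) zero_le)
      have hJfin : μ J ≠ ⊤ := fun h => hfinR (top_le_iff.mp (h ▸ measure_mono (hch p hp).1))
      set m := (μ J).toReal with hm
      have hmpos : 0 < m := ENNReal.toReal_pos hz hJfin
      have hJmeas : MeasurableSet J := measurable_dyadic _ _
      have hintJ : Integrable (Set.indicator J g) μ :=
        (integrable_indicator_iff hJmeas).2 (hg.mono_set (hch p hp).1)
      have hintK : Integrable (Set.indicator K g) μ :=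
        (integrable_indicator_iff hKmeas).2 hg
      have hc : (∫ y, g y * haarFn μ J K y ∂μ)
          = Real.sqrt m * (avgOn μ g J - aR) := by
        have heq : (fun y => g y * haarFn μ J K y)
            = fun y => (Real.sqrt m * m⁻¹) * Set.indicator J g y
              - (Real.sqrt m * T⁻¹) * Set.indicator K g y := by
          funext y
          rw [haarFn, if_neg hz, ← hm, ← hT, ← indicator_mul_eq g y (A := J),
            ← indicator_mul_eq g y (A := K)]
          ring
        rw [heq, integral_sub ((hintJ.const_mul _)) ((hintK.const_mul _)),
          integral_const_mul, integral_const_mul,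
          integral_indicator hJmeas, integral_indicator hKmeas]
        rw [avgOn, if_neg hz, haR, avgOn, if_neg hzK, ← hm, ← hT]
        ring
      rw [hc, haarFn, if_neg hz, ← hm, ← hT]
      have hss : Real.sqrt m * Real.sqrt m = m := Real.mul_self_sqrt hmpos.le
      have hmm : m * m⁻¹ = 1 := mul_inv_cancel₀ hmpos.ne'
      have hrw : Real.sqrt m * (avgOn μ g J - aR) *
          (Real.sqrt m * (m⁻¹ * Set.indicator J (fun _ => (1:ℝ)) x
            - T⁻¹ * Set.indicator K (fun _ => (1:ℝ)) x))
          = m * ((avgOn μ g J - aR) * (m⁻¹ * Set.indicator J (fun _ => (1:ℝ)) x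
            - T⁻¹ * Set.indicator K (fun _ => (1:ℝ)) x)) := by
        linear_combination ((avgOn μ g J - aR) * (m⁻¹ * Set.indicator J (fun _ => (1:ℝ)) x
          - T⁻¹ * Set.indicator K (fun _ => (1:ℝ)) x)) * hss
      rw [hrw]
      linear_combination (avgOn μ g J - aR) * (Set.indicator J (fun _ => (1:ℝ)) x) * hmm
  have h1 : ∑ p ∈ s, (μ (dyadicCube n p.1 p.2)).toReal * avgOn μ g (dyadicCube n p.1 p.2)
      = ∫ y in K, g y ∂μ := by
    rw [← sum_setIntegral μ R s (fun p hp => (hch p hp).1) hpart g hg]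
    refine Finset.sum_congr rfl fun p hp => ?_
    by_cases hz : μ (dyadicCube n p.1 p.2) = 0
    · rw [avgOn, if_pos hz, mul_zero, setIntegral_measure_zero _ hz]
    · have hfinp : μ (dyadicCube n p.1 p.2) ≠ ⊤ :=
        fun h => hfinR (top_le_iff.mp (h ▸ measure_mono (hch p hp).1))
      have hne : (μ (dyadicCube n p.1 p.2)).toReal ≠ 0 := ENNReal.toReal_ne_zero.2 ⟨hz, hfinp⟩
      rw [avgOn, if_neg hz, ← mul_assoc, mul_inv_cancel₀ hne, one_mul]
  have h2 : ∑ p ∈ s, (μ (dyadicCube n p.1 p.2)).toReal = T := by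
    have hint1 : IntegrableOn (fun _ => (1:ℝ)) K μ := by
      exact integrableOn_const hfinR
    have := sum_setIntegral μ R s (fun p hp => (hch p hp).1) hpart (fun _ => (1:ℝ)) hint1
    simpa [Measure.real] using this
  have h3 : ∑ p ∈ s, (μ (dyadicCube n p.1 p.2)).toReal *
      (avgOn μ g (dyadicCube n p.1 p.2) - aR) = 0 := by
    have e : ∑ p ∈ s, (μ (dyadicCube n p.1 p.2)).toReal *
        (avgOn μ g (dyadicCube n p.1 p.2) - aR)
        = (∫ y in K, g y ∂μ) - T * aR := by
      simp only [mul_sub]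
      rw [Finset.sum_sub_distrib, h1, ← Finset.sum_mul, h2]
    rw [e]
    by_cases hzK : μ K = 0
    · have : aR = 0 := by rw [haR, avgOn, if_pos hzK]
      rw [this, setIntegral_measure_zero _ hzK, mul_zero, sub_zero]
    · have hTne : T ≠ 0 := ENNReal.toReal_ne_zero.2 ⟨hzK, hfinR⟩
      rw [haR, avgOn, if_neg hzK, ← hT, ← mul_assoc, mul_inv_cancel₀ hTne, one_mul, sub_self]
  rw [Finset.sum_congr rfl key, Finset.sum_sub_distrib, Finset.sum_sub_distrib,
    ← Finset.sum_mul, h3, zero_mul, sub_zero, ← Finset.mul_sum, ← hpart x]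

end Stmt18Aux

open Stmt18Aux

/-- telescoping identity. For a finite convex, sibling-closed family
`𝒞` of dyadic cubes with unique maximal cube `Q` and minimal cubes `ℳ`,
`Σ_{J ∈ 𝒞∖{Q}} ⟨g, h_J⟩ h_J = Σ_{M ∈ ℳ} ⟨g⟩_M 𝟙_M − ⟨g⟩_Q 𝟙_Q` μ-a.e. -/
theorem stmt18 (n : ℕ) (hn : 0 < n) (μ : Measure (Fin n → ℝ))
    (𝒞 : Finset (ℤ × (Fin n → ℤ))) (Qp : ℤ × (Fin n → ℤ)) (hQ : Qp ∈ 𝒞)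
    (hmax : ∀ p ∈ 𝒞, dyadicCube n p.1 p.2 ⊆ dyadicCube n Qp.1 Qp.2)
    (hconv : ∀ p ∈ 𝒞, ∀ q ∈ 𝒞, ∀ r : ℤ × (Fin n → ℤ),
      dyadicCube n p.1 p.2 ⊆ dyadicCube n r.1 r.2 →
      dyadicCube n r.1 r.2 ⊆ dyadicCube n q.1 q.2 → r ∈ 𝒞)
    (hsib : ∀ p ∈ 𝒞, p ≠ Qp → ∀ q : ℤ × (Fin n → ℤ), q.1 = p.1 →
      parentCube n q = parentCube n p → q ∈ 𝒞)
    (ℳ : Finset (ℤ × (Fin n → ℤ)))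
    (hM : ∀ p, p ∈ ℳ ↔ p ∈ 𝒞 ∧
      ∀ q ∈ 𝒞, dyadicCube n q.1 q.2 ⊆ dyadicCube n p.1 p.2 → q = p)
    (hfin : μ (dyadicCube n Qp.1 Qp.2) ≠ ⊤)
    (g : (Fin n → ℝ) → ℝ) (hg : IntegrableOn g (dyadicCube n Qp.1 Qp.2) μ) :
    ∀ᵐ x ∂μ,
      (∑ p ∈ 𝒞.erase Qp,
        (∫ y, g y * haarFn μ (dyadicCube n p.1 p.2) (parentCube n p) y ∂μ) *
          haarFn μ (dyadicCube n p.1 p.2) (parentCube n p) x)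
      = (∑ p ∈ ℳ, avgOn μ g (dyadicCube n p.1 p.2) *
            Set.indicator (dyadicCube n p.1 p.2) (fun _ => (1:ℝ)) x)
        - avgOn μ g (dyadicCube n Qp.1 Qp.2) *
            Set.indicator (dyadicCube n Qp.1 Qp.2) (fun _ => (1:ℝ)) x := by
  classical
  have hfinC : ∀ p ∈ 𝒞, μ (dyadicCube n p.1 p.2) ≠ ⊤ :=
    fun p hp h => hfin (top_le_iff.mp (h ▸ measure_mono (hmax p hp)))
  -- parents of non-top members are non-minimal members
  have hA : ∀ p ∈ 𝒞.erase Qp, pp p ∈ 𝒞 \ ℳ := by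
    intro p hpe
    obtain ⟨hpne, hp⟩ := Finset.mem_erase.mp hpe
    have hlt : Qp.1 < p.1 := strict_scale hn (hmax p hp) hpne
    have hppQ : dyadicCube n (pp p).1 (pp p).2 ⊆ dyadicCube n Qp.1 Qp.2 := by
      obtain ⟨x, hx⟩ := dyadic_nonempty p.1 p.2
      exact nest (by simp only [pp]; omega) ⟨x, subset_pp p hx, hmax p hp hx⟩
    have hmem : pp p ∈ 𝒞 := hconv p hp Qp hQ (pp p) (subset_pp p) hppQ
    refine Finset.mem_sdiff.mpr ⟨hmem, fun hmin => ?_⟩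
    have h1 := ((hM (pp p)).1 hmin).2 p hp (subset_pp p)
    have h2 : p.1 = (pp p).1 := congrArg Prod.fst h1
    simp only [pp] at h2; omega
  -- every non-minimal member has a child in the family
  have hB0 : ∀ R ∈ 𝒞, R ∉ ℳ → ∃ p0 ∈ 𝒞.erase Qp, pp p0 = R := by
    intro R hR hRm
    have hnm : ¬ (R ∈ 𝒞 ∧ ∀ q ∈ 𝒞, dyadicCube n q.1 q.2 ⊆ dyadicCube n R.1 R.2 → q = R) :=
      fun h => hRm ((hM R).2 h)
    push_neg at hnm
    obtain ⟨q', hq', hq'sub, hq'ne⟩ := hnm hR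
    have hlt : R.1 < q'.1 := strict_scale hn hq'sub hq'ne
    set m0 := (q'.1 - R.1 - 1).toNat with hm0
    set p0 := anc m0 q' with hp0
    have hp0fst : p0.1 = R.1 + 1 := by
      rw [hp0, anc_fst]; omega
    obtain ⟨x, hx⟩ := dyadic_nonempty q'.1 q'.2
    have hsub0 : dyadicCube n p0.1 p0.2 ⊆ dyadicCube n R.1 R.2 :=
      nest (by omega) ⟨x, anc_subset m0 q' hx, hq'sub hx⟩
    have hp0C : p0 ∈ 𝒞 := hconv q' hq' R hR p0 (anc_subset m0 q') hsub0
    have hp0ne : p0 ≠ Qp := by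
      intro h
      have h2 : dyadicCube n R.1 R.2 ⊆ dyadicCube n p0.1 p0.2 := by
        rw [h]; exact hmax R hR
      have := eq_of_ss hn hsub0 h2
      rw [this] at hp0fst; omega
    have hppR : pp p0 = R := by
      obtain ⟨y, hy⟩ := dyadic_nonempty p0.1 p0.2
      have hy1 : y ∈ dyadicCube n (pp p0).1 (pp p0).2 := subset_pp p0 hy
      have hy2 : y ∈ dyadicCube n R.1 R.2 := hsub0 hy
      have hfst : (pp p0).1 = R.1 := by simp only [pp]; omega
      have hy1' : y ∈ dyadicCube n R.1 (pp p0).2 := by rw [← hfst]; exact hy1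
      exact Prod.ext_iff.mpr ⟨hfst, same_scale_eq hy1' hy2⟩
    exact ⟨p0, Finset.mem_erase.mpr ⟨hp0ne, hp0C⟩, hppR⟩
  -- characterization of the fibers
  have hchild : ∀ R ∈ 𝒞 \ ℳ, ∀ q : ℤ × (Fin n → ℤ),
      (q ∈ (𝒞.erase Qp).filter (fun r => pp r = R)) ↔
        (q.1 = R.1 + 1 ∧ ∀ i, Int.fdiv (q.2 i) 2 = R.2 i) := by
    intro R hR q
    obtain ⟨hRC, hRm⟩ := Finset.mem_sdiff.mp hR
    constructor
    · intro hq
      obtain ⟨hqe, hppq⟩ := Finset.mem_filter.mp hq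
      have h1 : q.1 - 1 = R.1 := congrArg Prod.fst hppq
      exact ⟨by omega, fun i => congrFun (congrArg Prod.snd hppq) i⟩
    · rintro ⟨hq1, hq2⟩
      have hppq : pp q = R := Prod.ext_iff.mpr ⟨by simp only [pp]; omega, funext hq2⟩
      obtain ⟨p0, hp0e, hp0⟩ := hB0 R hRC hRm
      obtain ⟨hp0ne, hp0C⟩ := Finset.mem_erase.mp hp0e
      have hq1' : q.1 = p0.1 := by
        have := congrArg Prod.fst hp0; simp only [pp] at this; omega
      have hqC : q ∈ 𝒞 := hsib p0 hp0C hp0ne q hq1'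
        (by rw [parentCube_eq_pp, parentCube_eq_pp, hppq, hp0])
      have hqQ : q ≠ Qp := by
        intro h
        have hsubR : dyadicCube n q.1 q.2 ⊆ dyadicCube n R.1 R.2 := by
          rw [← hppq]; exact subset_pp q
        have h2 : dyadicCube n R.1 R.2 ⊆ dyadicCube n q.1 q.2 := by
          rw [h]; exact hmax R hRC
        have := eq_of_ss hn hsubR h2
        rw [this] at hq1; omega
      exact Finset.mem_filter.mpr ⟨Finset.mem_erase.mpr ⟨hqQ, hqC⟩, hppq⟩
  -- the fibers partition the parent cube
  have hpart : ∀ R ∈ 𝒞 \ ℳ, ∀ y,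
      Set.indicator (dyadicCube n R.1 R.2) (fun _ => (1:ℝ)) y
      = ∑ q ∈ (𝒞.erase Qp).filter (fun r => pp r = R),
          Set.indicator (dyadicCube n q.1 q.2) (fun _ => (1:ℝ)) y := by
    intro R hR y
    by_cases hy : y ∈ dyadicCube n R.1 R.2
    · set qstar : ℤ × (Fin n → ℤ) := (R.1 + 1, fun i => ⌊y i * (2:ℝ)^(R.1+1)⌋) with hqs
      have hqsmem : qstar ∈ (𝒞.erase Qp).filter (fun r => pp r = R) :=
        (hchild R hR qstar).2 ⟨rfl, fun i => child_floor hy i⟩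
      have hymem : y ∈ dyadicCube n qstar.1 qstar.2 := mem_dyadic_iff.2 (fun i => rfl)
      rw [Set.indicator_of_mem hy, Finset.sum_eq_single_of_mem qstar hqsmem ?_,
        Set.indicator_of_mem hymem]
      intro q hq hne
      rw [Set.indicator_of_notMem]
      intro hyq
      apply hne
      have hq1 : q.1 = R.1 + 1 := ((hchild R hR q).1 hq).1
      have hyq' : y ∈ dyadicCube n (R.1+1) q.2 := by rw [← hq1]; exact hyq
      exact Prod.ext_iff.mpr ⟨hq1, same_scale_eq hyq' hymem⟩
    · rw [Set.indicator_of_notMem hy]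
      symm
      apply Finset.sum_eq_zero
      intro q hq
      have hppq : pp q = R := (Finset.mem_filter.mp hq).2
      have hsubR : dyadicCube n q.1 q.2 ⊆ dyadicCube n R.1 R.2 := by
        rw [← hppq]; exact subset_pp q
      exact Set.indicator_of_notMem (fun hyq => hy (hsubR hyq)) _
  -- null set
  have hZ : ∀ᵐ x ∂μ, ∀ p ∈ 𝒞, μ (dyadicCube n p.1 p.2) = 0 → x ∉ dyadicCube n p.1 p.2 := by
    refine (ae_ball_iff 𝒞.countable_toSet).2 fun p hp => ?_
    by_cases hz : μ (dyadicCube n p.1 p.2) = 0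
    · filter_upwards [measure_eq_zero_iff_ae_notMem.mp hz] with x hnx _
      exact hnx
    · exact Filter.Eventually.of_forall fun x h => absurd h hz
  filter_upwards [hZ] with x hx
  have step1 : ∑ p ∈ 𝒞.erase Qp,
      (∫ y, g y * haarFn μ (dyadicCube n p.1 p.2) (parentCube n p) y ∂μ) *
        haarFn μ (dyadicCube n p.1 p.2) (parentCube n p) x
      = ∑ R ∈ 𝒞 \ ℳ, ∑ p ∈ (𝒞.erase Qp).filter (fun r => pp r = R),
        (∫ y, g y * haarFn μ (dyadicCube n p.1 p.2) (parentCube n p) y ∂μ) *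
          haarFn μ (dyadicCube n p.1 p.2) (parentCube n p) x :=
    (Finset.sum_fiberwise_of_maps_to hA _).symm
  have step2 : ∀ R ∈ 𝒞 \ ℳ,
      ∑ p ∈ (𝒞.erase Qp).filter (fun r => pp r = R),
        (∫ y, g y * haarFn μ (dyadicCube n p.1 p.2) (parentCube n p) y ∂μ) *
          haarFn μ (dyadicCube n p.1 p.2) (parentCube n p) x
      = (∑ p ∈ (𝒞.erase Qp).filter (fun r => pp r = R),
            avgOn μ g (dyadicCube n p.1 p.2) *
              Set.indicator (dyadicCube n p.1 p.2) (fun _ => (1:ℝ)) x)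
        - avgOn μ g (dyadicCube n R.1 R.2) *
            Set.indicator (dyadicCube n R.1 R.2) (fun _ => (1:ℝ)) x := by
    intro R hR
    have hRC : R ∈ 𝒞 := (Finset.mem_sdiff.mp hR).1
    apply one_scale μ R _ ?_ (hpart R hR) (hfinC R hRC) g (hg.mono_set (hmax R hRC)) x ?_
    · intro p hp
      have hppq : pp p = R := (Finset.mem_filter.mp hp).2
      constructor
      · rw [← hppq]; exact subset_pp p
      · rw [parentCube_eq_pp, hppq]
    · intro p hp
      have hpC : p ∈ 𝒞 := Finset.mem_of_mem_erase (Finset.mem_filter.mp hp).1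
      exact hx p hpC
  rw [step1, Finset.sum_congr rfl step2, Finset.sum_sub_distrib,
    Finset.sum_fiberwise_of_maps_to hA
      (fun p => avgOn μ g (dyadicCube n p.1 p.2) *
        Set.indicator (dyadicCube n p.1 p.2) (fun _ => (1:ℝ)) x)]
  -- final telescoping algebra
  have hMsub : ℳ ⊆ 𝒞 := fun p hp => ((hM p).1 hp).1
  have e1 : (∑ p ∈ 𝒞.erase Qp, avgOn μ g (dyadicCube n p.1 p.2) *
        Set.indicator (dyadicCube n p.1 p.2) (fun _ => (1:ℝ)) x)
      + avgOn μ g (dyadicCube n Qp.1 Qp.2) *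
        Set.indicator (dyadicCube n Qp.1 Qp.2) (fun _ => (1:ℝ)) x
      = ∑ p ∈ 𝒞, avgOn μ g (dyadicCube n p.1 p.2) *
        Set.indicator (dyadicCube n p.1 p.2) (fun _ => (1:ℝ)) x :=
    Finset.sum_erase_add 𝒞 _ hQ
  have e2 : (∑ p ∈ 𝒞 \ ℳ, avgOn μ g (dyadicCube n p.1 p.2) *
        Set.indicator (dyadicCube n p.1 p.2) (fun _ => (1:ℝ)) x)
      + ∑ p ∈ ℳ, avgOn μ g (dyadicCube n p.1 p.2) *
        Set.indicator (dyadicCube n p.1 p.2) (fun _ => (1:ℝ)) x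
      = ∑ p ∈ 𝒞, avgOn μ g (dyadicCube n p.1 p.2) *
        Set.indicator (dyadicCube n p.1 p.2) (fun _ => (1:ℝ)) x :=
    Finset.sum_sdiff hMsub
  linarith
end
end
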